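/- arXiv:1206.2946 — 11 statements merged into one kernel-verified Lean document; each statement's English description precedes it below -/
import Mathlib

section
/- Let A be a category with a class of morphisms E satisfying (E1)–(E4). Given a commutative diagram where f₁ : A₁ → B₁ and f₀ : A₀ → B₀ are in E with kernel pairs R[f₁] and R[f₀], vertical morphisms a : A₁ → A₀, b : B₁ → B₀ in E and induced r : R[f₁] → R[f₀], the square (a, f₁) : f₁ → f₀ (i.e., the square with sides a, b, f₁, f₀) is a double extension if and only if either of the two squares formed by the kernel-pair projections together with r and a is a double extension. -/
open CategoryTheory CategoryTheory.Limits

/-- A commutative square (top `f₁`, left `a`, right `b`, bottom `f₀`) is a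
*double extension* with respect to a class `E` when all four sides are in `E`,
the pullback of the bottom and right sides exists, and the comparison morphism
to it is in `E`. -/
def IsDblExt {C : Type*} [Category C] (E : MorphismProperty C)
    {A₁ A₀ B₁ B₀ : C} (f₁ : A₁ ⟶ B₁) (a : A₁ ⟶ A₀) (b : B₁ ⟶ B₀) (f₀ : A₀ ⟶ B₀) : Prop :=
  E f₁ ∧ E a ∧ E b ∧ E f₀ ∧
  ∃ (P : C) (pA : P ⟶ A₀) (pB : P ⟶ B₁) (c : A₁ ⟶ P),
    IsPullback pA pB f₀ b ∧ c ≫ pA = a ∧ c ≫ pB = f₁ ∧ E c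

/-- Transfer of the `E`-property of comparison morphisms between two pullbacks of the
same cospan. -/
lemma transferE {C : Type*} [Category C] (E : MorphismProperty C)
    (hE1 : ∀ {X Y : C} (f : X ⟶ Y), IsIso f → E f)
    (hE3 : ∀ {X Y Z : C} (f : X ⟶ Y) (g : Y ⟶ Z), E f → E g → E (f ≫ g))
    {X P P' Y Z W : C} {u : Y ⟶ W} {v : Z ⟶ W}
    {pA : P ⟶ Y} {pB : P ⟶ Z} {pA' : P' ⟶ Y} {pB' : P' ⟶ Z}
    (h : IsPullback pA pB u v) (h' : IsPullback pA' pB' u v)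
    (k : X ⟶ P) (k' : X ⟶ P')
    (e₁ : k ≫ pA = k' ≫ pA') (e₂ : k ≫ pB = k' ≫ pB') (hk : E k) : E k' := by
  have hk' : k' = k ≫ (h.isoIsPullback _ _ h').hom := by
    apply h'.hom_ext
    · rw [Category.assoc, IsPullback.isoIsPullback_hom_fst, e₁]
    · rw [Category.assoc, IsPullback.isoIsPullback_hom_snd, e₂]
  rw [hk']
  exact hE3 _ _ hk (hE1 _ inferInstance)

/-- One half of statement 4: the kernel-pair square built from the *first* projections is a
double extension iff the original square is one. -/
lemma stmt4_aux {C : Type*} [Category C] (E : MorphismProperty C)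
    (hE1 : ∀ {X Y : C} (f : X ⟶ Y), IsIso f → E f)
    (hE2exists : ∀ {X Y Z : C} (f : X ⟶ Z) (g : Y ⟶ Z), E f → HasPullback g f)
    (hE2stable : ∀ {P X Y Z : C} (fst : P ⟶ X) (snd : P ⟶ Y) (f : X ⟶ Z) (g : Y ⟶ Z),
      IsPullback fst snd f g → E g → E fst)
    (hE3 : ∀ {X Y Z : C} (f : X ⟶ Y) (g : Y ⟶ Z), E f → E g → E (f ≫ g))
    (hE4 : ∀ {X Y Z : C} (f : X ⟶ Y) (g : Y ⟶ Z), E (f ≫ g) → E g)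
    {A₁ A₀ B₁ B₀ R₁ R₀ : C}
    (f₁ : A₁ ⟶ B₁) (f₀ : A₀ ⟶ B₀) (a : A₁ ⟶ A₀) (b : B₁ ⟶ B₀)
    (hf₁ : E f₁) (hf₀ : E f₀) (ha : E a) (hb : E b)
    (w : f₁ ≫ b = a ≫ f₀)
    (p₀ p₁ : R₁ ⟶ A₁) (hR₁ : IsPullback p₀ p₁ f₁ f₁)
    (q₀ q₁ : R₀ ⟶ A₀) (hR₀ : IsPullback q₀ q₁ f₀ f₀)
    (r : R₁ ⟶ R₀) (hr₀ : r ≫ q₀ = p₀ ≫ a) (hr₁ : r ≫ q₁ = p₁ ≫ a) :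
    IsDblExt E p₀ r a q₀ ↔ IsDblExt E f₁ a b f₀ := by
  haveI : HasPullback f₀ b := hE2exists b f₀ hb
  haveI : HasPullback q₀ a := hE2exists a q₀ ha
  -- the canonical pullback of the original square
  set pA : pullback f₀ b ⟶ A₀ := pullback.fst f₀ b with hpA
  set pB : pullback f₀ b ⟶ B₁ := pullback.snd f₀ b with hpB
  have hP : IsPullback pA pB f₀ b := IsPullback.of_hasPullback f₀ b
  set c : A₁ ⟶ pullback f₀ b := pullback.lift a f₁ w.symm with hcdef
  have hc₁ : c ≫ pA = a := pullback.lift_fst _ _ _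
  have hc₂ : c ≫ pB = f₁ := pullback.lift_snd _ _ _
  -- the canonical pullback of the kernel-pair square
  set qA : pullback q₀ a ⟶ R₀ := pullback.fst q₀ a with hqA'
  set qB : pullback q₀ a ⟶ A₁ := pullback.snd q₀ a with hqB'
  have hQ : IsPullback qA qB q₀ a := IsPullback.of_hasPullback q₀ a
  set d : R₁ ⟶ pullback q₀ a := pullback.lift r p₀ hr₀ with hddef
  have hd₁ : d ≫ qA = r := pullback.lift_fst _ _ _
  have hd₂ : d ≫ qB = p₀ := pullback.lift_snd _ _ _
  -- the morphism `e` between the two pullbacks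
  have hcomm : (qA ≫ q₁) ≫ f₀ = (qB ≫ f₁) ≫ b := by
    rw [Category.assoc, ← hR₀.w, ← Category.assoc, hQ.w, Category.assoc, ← w,
      ← Category.assoc]
  set e : pullback q₀ a ⟶ pullback f₀ b := pullback.lift (qA ≫ q₁) (qB ≫ f₁) hcomm with hedef
  have he₁ : e ≫ pA = qA ≫ q₁ := pullback.lift_fst _ _ _
  have he₂ : e ≫ pB = qB ≫ f₁ := pullback.lift_snd _ _ _
  -- `e` is a pullback of `f₁`, hence in `E`
  have big : IsPullback (qA ≫ q₁) qB f₀ (f₁ ≫ b) := by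
    have h := hQ.paste_horiz hR₀.flip
    rwa [← w] at h
  have claim1 : IsPullback e qB pB f₁ := by
    apply IsPullback.of_right _ he₂ hP
    rwa [he₁]
  have he : E e := hE2stable e qB pB f₁ claim1 hf₁
  -- `d` is a pullback of `c`
  have comm : p₁ ≫ c = d ≫ e := by
    apply hP.hom_ext
    · rw [Category.assoc, Category.assoc, hc₁, he₁, ← Category.assoc, hd₁, hr₁]
    · rw [Category.assoc, Category.assoc, hc₂, he₂, ← Category.assoc, hd₂, hR₁.w]
  have claim2 : IsPullback d p₁ e c := by
    have bigv : IsPullback p₁ (d ≫ qB) (c ≫ pB) f₁ := by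
      rw [hd₂, hc₂]; exact hR₁.flip
    exact (IsPullback.of_bot bigv comm claim1).flip
  -- sides of the kernel-pair square
  have hp₀ : E p₀ := hE2stable p₀ p₁ f₁ f₁ hR₁ hf₁
  have hq₀ : E q₀ := hE2stable q₀ q₁ f₀ f₀ hR₀ hf₀
  have hqAE : E qA := hE2stable qA qB q₀ a hQ ha
  constructor
  · rintro ⟨-, -, -, -, Q', qA', qB', d', hQ', hd₁', hd₂', hd'⟩
    have hd : E d := transferE E hE1 hE3 hQ' hQ d' d
      (by rw [hd₁, hd₁']) (by rw [hd₂, hd₂']) hd'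
    have hc : E c := by
      refine hE4 p₁ c ?_
      rw [comm]; exact hE3 d e hd he
    exact ⟨hf₁, ha, hb, hf₀, _, pA, pB, c, hP, hc₁, hc₂, hc⟩
  · rintro ⟨-, -, -, -, P', pA', pB', c', hP', hc₁', hc₂', hc'⟩
    have hc : E c := transferE E hE1 hE3 hP' hP c' c
      (by rw [hc₁, hc₁']) (by rw [hc₂, hc₂']) hc'
    have hd : E d := hE2stable d p₁ e c claim2 hc
    have hrE : E r := by rw [← hd₁]; exact hE3 d qA hd hqAE
    exact ⟨hp₀, hrE, ha, hq₀, _, qA, qB, d, hQ, hd₁, hd₂, hd⟩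

/-- under (E1)–(E4), given a commutative square of `E`-morphisms with
kernel pairs `R[f₁]`, `R[f₀]` and the induced morphism `r` between them, either of the
two kernel-pair squares is a double extension iff the original square is one. -/
theorem stmt4 {C : Type*} [Category C] (E : MorphismProperty C)
    (hE1 : ∀ {X Y : C} (f : X ⟶ Y), IsIso f → E f)
    (hE2exists : ∀ {X Y Z : C} (f : X ⟶ Z) (g : Y ⟶ Z), E f → HasPullback g f)
    (hE2stable : ∀ {P X Y Z : C} (fst : P ⟶ X) (snd : P ⟶ Y) (f : X ⟶ Z) (g : Y ⟶ Z),
      IsPullback fst snd f g → E g → E fst)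
    (hE3 : ∀ {X Y Z : C} (f : X ⟶ Y) (g : Y ⟶ Z), E f → E g → E (f ≫ g))
    (hE4 : ∀ {X Y Z : C} (f : X ⟶ Y) (g : Y ⟶ Z), E (f ≫ g) → E g)
    {A₁ A₀ B₁ B₀ R₁ R₀ : C}
    (f₁ : A₁ ⟶ B₁) (f₀ : A₀ ⟶ B₀) (a : A₁ ⟶ A₀) (b : B₁ ⟶ B₀)
    (hf₁ : E f₁) (hf₀ : E f₀) (ha : E a) (hb : E b)
    (w : f₁ ≫ b = a ≫ f₀)
    (p₀ p₁ : R₁ ⟶ A₁) (hR₁ : IsPullback p₀ p₁ f₁ f₁)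
    (q₀ q₁ : R₀ ⟶ A₀) (hR₀ : IsPullback q₀ q₁ f₀ f₀)
    (r : R₁ ⟶ R₀) (hr₀ : r ≫ q₀ = p₀ ≫ a) (hr₁ : r ≫ q₁ = p₁ ≫ a) :
    (IsDblExt E p₀ r a q₀ ↔ IsDblExt E f₁ a b f₀) ∧
    (IsDblExt E p₁ r a q₁ ↔ IsDblExt E f₁ a b f₀) := by
  constructor
  · exact stmt4_aux E hE1 hE2exists hE2stable hE3 hE4 f₁ f₀ a b hf₁ hf₀ ha hb w
      p₀ p₁ hR₁ q₀ q₁ hR₀ r hr₀ hr₁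
  · exact stmt4_aux E hE1 hE2exists hE2stable hE3 hE4 f₁ f₀ a b hf₁ hf₀ ha hb w
      p₁ p₀ hR₁.flip q₁ q₀ hR₀.flip r hr₁ hr₀
end

section
/- Let A be a category and E a class of morphisms satisfying (E1)–(E4). Then the following are equivalent: (i) the class E¹ of double extensions satisfies right cancellation (g∘f ∈ E¹ implies g ∈ E¹); (ii) every split epimorphism between morphisms of E (a commutative square with horizontal split epimorphisms and vertical morphisms in E) is a double extension; (iii) every split epimorphism of split epimorphisms is a double extension. -/
open CategoryTheory CategoryTheory.Limits

/-- (i): the class `E¹` of double extensions satisfies right cancellation: if a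
composite of morphisms of extensions is a double extension then the second factor
is one. -/
def CondI {C : Type*} [Category C] (E : MorphismProperty C) : Prop :=
  ∀ {A₁ A₀ B₁ B₀ C₁ C₀ : C} (a : A₁ ⟶ A₀) (b : B₁ ⟶ B₀) (c : C₁ ⟶ C₀)
    (f₁ : A₁ ⟶ B₁) (f₀ : A₀ ⟶ B₀) (g₁ : B₁ ⟶ C₁) (g₀ : B₀ ⟶ C₀),
    E a → E b → E c → f₁ ≫ b = a ≫ f₀ → g₁ ≫ c = b ≫ g₀ →
    IsDblExt E (f₁ ≫ g₁) a c (f₀ ≫ g₀) → IsDblExt E g₁ b c g₀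

/-- (ii): every split epimorphism between morphisms of `E` (a square whose
horizontal arrows are split epimorphisms, with compatible splittings, and whose
vertical arrows are in `E`) is a double extension. -/
def CondII {C : Type*} [Category C] (E : MorphismProperty C) : Prop :=
  ∀ {A₁ A₀ B₁ B₀ : C} (a : A₁ ⟶ A₀) (b : B₁ ⟶ B₀)
    (f₁ : A₁ ⟶ B₁) (f₀ : A₀ ⟶ B₀) (s₁ : B₁ ⟶ A₁) (s₀ : B₀ ⟶ A₀),
    E a → E b → f₁ ≫ b = a ≫ f₀ → s₁ ≫ a = b ≫ s₀ →
    s₁ ≫ f₁ = 𝟙 B₁ → s₀ ≫ f₀ = 𝟙 B₀ → IsDblExt E f₁ a b f₀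

/-- (iii): every split epimorphism of split epimorphisms (a commutative square of
split epimorphisms in both directions, with compatible splittings) is a double
extension. -/
def CondIII {C : Type*} [Category C] (E : MorphismProperty C) : Prop :=
  ∀ {A₁ A₀ B₁ B₀ : C} (a : A₁ ⟶ A₀) (b : B₁ ⟶ B₀)
    (f₁ : A₁ ⟶ B₁) (f₀ : A₀ ⟶ B₀)
    (ta : A₀ ⟶ A₁) (tb : B₀ ⟶ B₁) (s₁ : B₁ ⟶ A₁) (s₀ : B₀ ⟶ A₀),
    f₁ ≫ b = a ≫ f₀ → s₁ ≫ a = b ≫ s₀ → ta ≫ f₁ = f₀ ≫ tb → s₀ ≫ ta = tb ≫ s₁ →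
    s₁ ≫ f₁ = 𝟙 B₁ → s₀ ≫ f₀ = 𝟙 B₀ → ta ≫ a = 𝟙 A₀ → tb ≫ b = 𝟙 B₀ →
    IsDblExt E f₁ a b f₀

section AuxLemmas

variable {C : Type*} [Category C] {E : MorphismProperty C}

/-- A split epimorphism lies in `E` (uses (E1) and (E4)). -/
lemma splitEpi_mem (hE1 : ∀ {X Y : C} (f : X ⟶ Y), IsIso f → E f)
    (hE4 : ∀ {X Y Z : C} (f : X ⟶ Y) (g : Y ⟶ Z), E (f ≫ g) → E g)
    {X Y : C} (f : X ⟶ Y) (s : Y ⟶ X) (hs : s ≫ f = 𝟙 Y) : E f :=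
  hE4 s f (by rw [hs]; exact hE1 _ inferInstance)

/-- (i) implies (ii). -/
lemma condI_imp_condII (hE1 : ∀ {X Y : C} (f : X ⟶ Y), IsIso f → E f)
    (hI : CondI E) : CondII E := by
  intro A₁ A₀ B₁ B₀ a b f₁ f₀ s₁ s₀ hEa hEb comm hcompat hs₁ hs₀
  refine hI b a b s₁ s₀ f₁ f₀ hEb hEa hEb hcompat comm ?_
  refine ⟨?_, hEb, hEb, ?_, B₁, b, 𝟙 B₁, 𝟙 B₁, ?_, by simp, by simp [hs₁],
    hE1 _ inferInstance⟩
  · rw [hs₁]; exact hE1 _ inferInstance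
  · rw [hs₀]; exact hE1 _ inferInstance
  · rw [hs₀]; exact (IsPullback.id_horiz b).flip

/-- (ii) implies (iii). -/
lemma condII_imp_condIII (hE1 : ∀ {X Y : C} (f : X ⟶ Y), IsIso f → E f)
    (hE4 : ∀ {X Y Z : C} (f : X ⟶ Y) (g : Y ⟶ Z), E (f ≫ g) → E g)
    (hII : CondII E) : CondIII E := by
  intro A₁ A₀ B₁ B₀ a b f₁ f₀ ta tb s₁ s₀ comm hcompat _ _ hs₁ hs₀ hta htb
  exact hII a b f₁ f₀ s₁ s₀ (splitEpi_mem hE1 hE4 a ta hta)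
    (splitEpi_mem hE1 hE4 b tb htb) comm hcompat hs₁ hs₀

/-- (iii) implies (ii). -/
lemma condIII_imp_condII (hE1 : ∀ {X Y : C} (f : X ⟶ Y), IsIso f → E f)
    (hE2exists : ∀ {X Y Z : C} (f : X ⟶ Z) (g : Y ⟶ Z), E f → HasPullback g f)
    (hE2stable : ∀ {P X Y Z : C} (fst : P ⟶ X) (snd : P ⟶ Y) (f : X ⟶ Z) (g : Y ⟶ Z),
      IsPullback fst snd f g → E g → E fst)
    (hE3 : ∀ {X Y Z : C} (f : X ⟶ Y) (g : Y ⟶ Z), E f → E g → E (f ≫ g))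
    (hE4 : ∀ {X Y Z : C} (f : X ⟶ Y) (g : Y ⟶ Z), E (f ≫ g) → E g)
    (hIII : CondIII E) : CondII E := by
  intro A₁ A₀ B₁ B₀ a b f₁ f₀ s₁ s₀ hEa hEb comm hcompat hs₁ hs₀
  haveI : HasPullback a a := hE2exists a a hEa
  haveI : HasPullback b b := hE2exists b b hEb
  haveI : HasPullback f₀ b := hE2exists b f₀ hEb
  -- kernel pairs
  set Ka := pullback a a with hKa
  set Kb := pullback b b with hKb
  -- induced morphism between kernel pairs
  have wf : (pullback.fst a a ≫ f₁) ≫ b = (pullback.snd a a ≫ f₁) ≫ b := by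
    rw [Category.assoc, Category.assoc, comm, ← Category.assoc, ← Category.assoc,
      pullback.condition]
  set fbar : Ka ⟶ Kb := pullback.lift _ _ wf with hfbar
  have ws : (pullback.fst b b ≫ s₁) ≫ a = (pullback.snd b b ≫ s₁) ≫ a := by
    rw [Category.assoc, Category.assoc, hcompat, ← Category.assoc, ← Category.assoc,
      pullback.condition]
  set sbar : Kb ⟶ Ka := pullback.lift _ _ ws with hsbar
  set Δa : A₁ ⟶ Ka := pullback.lift (𝟙 A₁) (𝟙 A₁) rfl with hΔa
  set Δb : B₁ ⟶ Kb := pullback.lift (𝟙 B₁) (𝟙 B₁) rfl with hΔb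
  have hsq := hIII (pullback.fst a a) (pullback.fst b b) fbar f₁ Δa Δb sbar s₁
    (pullback.lift_fst _ _ _) (pullback.lift_fst _ _ _)
    (by
      apply pullback.hom_ext <;>
        simp [hfbar, hΔa, hΔb, pullback.lift_snd_assoc, pullback.lift_snd, pullback.lift_fst_assoc, pullback.lift_fst])
    (by
      apply pullback.hom_ext <;>
        simp [hsbar, hΔa, hΔb, pullback.lift_snd_assoc, pullback.lift_snd, pullback.lift_fst_assoc, pullback.lift_fst])
    (by
      apply pullback.hom_ext <;>
        simp [hfbar, hsbar, hs₁, pullback.lift_snd_assoc, pullback.lift_snd, pullback.lift_fst_assoc, pullback.lift_fst])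
    hs₁ (pullback.lift_fst _ _ _) (pullback.lift_fst _ _ _)
  obtain ⟨-, -, -, -, P, pA, pB, ebar, hP, he₁, he₂, hEe⟩ := hsq
  -- the comparison morphism of the original square
  have hd₀w : a ≫ f₀ = f₁ ≫ b := comm.symm
  set d₀ : A₁ ⟶ pullback f₀ b := pullback.lift a f₁ hd₀w with hd₀
  -- φ : P ⟶ pullback f₀ b
  have wφ : (pA ≫ a) ≫ f₀ = (pB ≫ pullback.snd b b) ≫ b := by
    rw [Category.assoc, hd₀w, ← Category.assoc, hP.w, Category.assoc, Category.assoc,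
      ← pullback.condition]
  set φ : P ⟶ pullback f₀ b := pullback.lift _ _ wφ with hφ
  have hφpb : IsPullback φ pA (pullback.fst f₀ b) a := by
    apply IsPullback.of_right ?_ (pullback.lift_fst _ _ _) (IsPullback.of_hasPullback f₀ b).flip
    rw [pullback.lift_snd]
    have := IsPullback.paste_horiz hP.flip (IsPullback.of_hasPullback b b).flip
    rwa [show a ≫ f₀ = f₁ ≫ b from hd₀w]
  have hEφ : E φ := hE2stable _ _ _ _ hφpb hEa
  have hcomp2 : ebar ≫ φ = pullback.snd a a ≫ d₀ := by
    apply pullback.hom_ext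
    · rw [Category.assoc, hφ, pullback.lift_fst, ← Category.assoc, he₁, pullback.condition,
        Category.assoc, hd₀, pullback.lift_fst]
    · rw [Category.assoc, hφ, pullback.lift_snd, ← Category.assoc, he₂, hfbar,
        pullback.lift_snd, Category.assoc, hd₀, pullback.lift_snd]
  have hEd₀ : E d₀ := hE4 _ _ (by rw [← hcomp2]; exact hE3 _ _ hEe hEφ)
  exact ⟨splitEpi_mem hE1 hE4 f₁ s₁ hs₁, hEa, hEb, splitEpi_mem hE1 hE4 f₀ s₀ hs₀,
    pullback f₀ b, pullback.fst f₀ b, pullback.snd f₀ b, d₀,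
    IsPullback.of_hasPullback f₀ b, pullback.lift_fst _ _ _, pullback.lift_snd _ _ _, hEd₀⟩

/-- (ii) implies (i). -/
lemma condII_imp_condI (hE2exists : ∀ {X Y Z : C} (f : X ⟶ Z) (g : Y ⟶ Z), E f → HasPullback g f)
    (hE2stable : ∀ {P X Y Z : C} (fst : P ⟶ X) (snd : P ⟶ Y) (f : X ⟶ Z) (g : Y ⟶ Z),
      IsPullback fst snd f g → E g → E fst)
    (hE3 : ∀ {X Y Z : C} (f : X ⟶ Y) (g : Y ⟶ Z), E f → E g → E (f ≫ g))
    (hE4 : ∀ {X Y Z : C} (f : X ⟶ Y) (g : Y ⟶ Z), E (f ≫ g) → E g)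
    (hII : CondII E) : CondI E := by
  intro A₁ A₀ B₁ B₀ C₁ C₀ a b c f₁ f₀ g₁ g₀ hEa hEb hEc comm₁ comm₂ hcomp
  obtain ⟨hEfg₁, -, -, hEfg₀, P, pA, pB, e, hP, hea, hefg, hEe⟩ := hcomp
  have hEg₁ : E g₁ := hE4 f₁ g₁ hEfg₁
  have hEg₀ : E g₀ := hE4 f₀ g₀ hEfg₀
  have hEpA : E pA := hE4 e pA (by rw [hea]; exact hEa)
  haveI : HasPullback a a := hE2exists a a hEa
  haveI : HasPullback b b := hE2exists b b hEb
  haveI : HasPullback c c := hE2exists c c hEc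
  haveI : HasPullback a pA := hE2exists pA a hEpA
  haveI : HasPullback g₀ c := hE2exists c g₀ hEc
  -- induced morphisms between kernel pairs
  have wg : (pullback.fst b b ≫ g₁) ≫ c = (pullback.snd b b ≫ g₁) ≫ c := by
    rw [Category.assoc, Category.assoc, comm₂, ← Category.assoc, ← Category.assoc,
      pullback.condition]
  set ghat : pullback b b ⟶ pullback c c := pullback.lift _ _ wg with hghat
  have wff : (pullback.fst a a ≫ f₁) ≫ b = (pullback.snd a a ≫ f₁) ≫ b := by
    rw [Category.assoc, Category.assoc, comm₁, ← Category.assoc, ← Category.assoc,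
      pullback.condition]
  set fhat : pullback a a ⟶ pullback b b := pullback.lift _ _ wff with hfhat
  -- χ : Ka ⟶ L where L = pullback a pA, a pullback of e
  have wχ : pullback.fst a a ≫ a = (pullback.snd a a ≫ e) ≫ pA := by
    rw [Category.assoc, hea, pullback.condition]
  set χ : pullback a a ⟶ pullback a pA := pullback.lift _ _ wχ with hχ
  have hχpb : IsPullback χ (pullback.snd a a) (pullback.snd a pA) e := by
    apply IsPullback.of_right ?_ (pullback.lift_snd _ _ _) (IsPullback.of_hasPullback a pA)
    rw [pullback.lift_fst, hea]
    exact IsPullback.of_hasPullback a a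
  have hEχ : E χ := hE2stable _ _ _ _ hχpb hEe
  -- ψ : L ⟶ Kc, a pullback of f₁ ≫ g₁
  have hbig : (f₁ ≫ g₁) ≫ c = a ≫ f₀ ≫ g₀ := by
    rw [Category.assoc, comm₂, ← Category.assoc, comm₁, Category.assoc]
  have wψ : (pullback.fst a pA ≫ (f₁ ≫ g₁)) ≫ c = (pullback.snd a pA ≫ pB) ≫ c := by
    rw [Category.assoc, hbig, Category.assoc, ← hP.w, ← Category.assoc, pullback.condition,
      Category.assoc]
  set ψ : pullback a pA ⟶ pullback c c := pullback.lift _ _ wψ with hψ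
  have hψpb : IsPullback ψ (pullback.fst a pA) (pullback.fst c c) (f₁ ≫ g₁) := by
    apply IsPullback.of_right ?_ (pullback.lift_fst _ _ _) (IsPullback.of_hasPullback c c).flip
    rw [pullback.lift_snd]
    have := IsPullback.paste_horiz (IsPullback.of_hasPullback a pA).flip hP.flip
    rwa [← hbig] at this
  have hEψ : E ψ := hE2stable _ _ _ _ hψpb hEfg₁
  -- E ghat via cancellation
  have hfg : fhat ≫ ghat = χ ≫ ψ := by
    apply pullback.hom_ext
    · rw [Category.assoc, Category.assoc, hghat, pullback.lift_fst, hψ, pullback.lift_fst,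
        ← Category.assoc, hfhat, pullback.lift_fst, ← Category.assoc, hχ, pullback.lift_fst,
        Category.assoc]
    · rw [Category.assoc, Category.assoc, hghat, pullback.lift_snd, hψ, pullback.lift_snd,
        ← Category.assoc, hfhat, pullback.lift_snd, ← Category.assoc, hχ, pullback.lift_snd,
        Category.assoc, Category.assoc, hefg]
  have hEghat : E ghat := hE4 fhat ghat (by rw [hfg]; exact hE3 _ _ hEχ hEψ)
  -- apply (ii) to the kernel-pair square of the second square
  set Δb : B₁ ⟶ pullback b b := pullback.lift (𝟙 B₁) (𝟙 B₁) rfl with hΔb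
  set Δc : C₁ ⟶ pullback c c := pullback.lift (𝟙 C₁) (𝟙 C₁) rfl with hΔc
  have hsq := hII ghat g₁ (pullback.fst b b) (pullback.fst c c) Δb Δc hEghat hEg₁
    (by rw [hghat, pullback.lift_fst])
    (by apply pullback.hom_ext <;> simp [hghat, hΔb, hΔc, pullback.lift_snd_assoc, pullback.lift_snd, pullback.lift_fst_assoc, pullback.lift_fst])
    (pullback.lift_fst _ _ _) (pullback.lift_fst _ _ _)
  obtain ⟨-, -, -, -, T, tA, tB, Γ, hT, hΓA, hΓB, hEΓ⟩ := hsq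
  -- the comparison morphism of the second square
  set d : B₁ ⟶ pullback g₀ c := pullback.lift b g₁ comm₂.symm with hd
  -- ω : T ⟶ pullback g₀ c, a pullback of b
  have wω : (tB ≫ b) ≫ g₀ = (tA ≫ pullback.snd c c) ≫ c := by
    rw [Category.assoc, ← comm₂, ← Category.assoc, ← hT.w, Category.assoc, Category.assoc,
      pullback.condition]
  set ω : T ⟶ pullback g₀ c := pullback.lift _ _ wω with hω
  have hωpb : IsPullback ω tB (pullback.fst g₀ c) b := by
    apply IsPullback.of_right ?_ (pullback.lift_fst _ _ _) (IsPullback.of_hasPullback g₀ c).flip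
    rw [pullback.lift_snd]
    have := IsPullback.paste_horiz hT (IsPullback.of_hasPullback c c).flip
    rwa [comm₂] at this
  have hEω : E ω := hE2stable _ _ _ _ hωpb hEb
  have hdcomp : Γ ≫ ω = pullback.snd b b ≫ d := by
    apply pullback.hom_ext
    · rw [Category.assoc, hω, pullback.lift_fst, ← Category.assoc, hΓB, pullback.condition,
        Category.assoc, hd, pullback.lift_fst]
    · rw [Category.assoc, hω, pullback.lift_snd, ← Category.assoc, hΓA, hghat,
        pullback.lift_snd, Category.assoc, hd, pullback.lift_snd]
  have hEd : E d := hE4 _ _ (by rw [← hdcomp]; exact hE3 _ _ hEΓ hEω)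
  exact ⟨hEg₁, hEb, hEc, hEg₀, pullback g₀ c, pullback.fst g₀ c, pullback.snd g₀ c, d,
    IsPullback.of_hasPullback g₀ c, pullback.lift_fst _ _ _, pullback.lift_snd _ _ _, hEd⟩

end AuxLemmas

/-- under (E1)–(E4), the conditions (i), (ii) and (iii) are
equivalent. -/
theorem stmt5 {C : Type*} [Category C] (E : MorphismProperty C)
    (hE1 : ∀ {X Y : C} (f : X ⟶ Y), IsIso f → E f)
    (hE2exists : ∀ {X Y Z : C} (f : X ⟶ Z) (g : Y ⟶ Z), E f → HasPullback g f)
    (hE2stable : ∀ {P X Y Z : C} (fst : P ⟶ X) (snd : P ⟶ Y) (f : X ⟶ Z) (g : Y ⟶ Z),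
      IsPullback fst snd f g → E g → E fst)
    (hE3 : ∀ {X Y Z : C} (f : X ⟶ Y) (g : Y ⟶ Z), E f → E g → E (f ≫ g))
    (hE4 : ∀ {X Y Z : C} (f : X ⟶ Y) (g : Y ⟶ Z), E (f ≫ g) → E g) :
    (CondI E ↔ CondII E) ∧ (CondII E ↔ CondIII E) := by
  exact ⟨⟨fun hI => condI_imp_condII hE1 hI,
    fun hII => condII_imp_condI hE2exists hE2stable hE3 hE4 hII⟩,
    ⟨fun hII => condII_imp_condIII hE1 hE4 hII,
    fun hIII => condIII_imp_condII hE1 hE2exists hE2stable hE3 hE4 hIII⟩⟩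
end

section
/- Let A be a category and E a class of morphisms satisfying (E1)–(E5). Then the pair (Ext A, E¹), where Ext A is the full subcategory of the arrow category on morphisms in E and E¹ is the class of double extensions, also satisfies (E1)–(E5). -/
open CategoryTheory CategoryTheory.Limits

/-- Given a class `F` of morphisms of a category `D`, `ext1 F` is the class of
*double extensions* in the arrow category: a morphism of arrows `f : a ⟶ b` lies in
`ext1 F` when `a`, `b` are `F`-extensions, both components of `f` are in `F`, the
pullback of `f.right` and `b` exists, and the comparison morphism to it is in `F`.
Iterating `ext1` yields the classes of higher extensions. -/
def ext1 {D : Type*} [Category D] (F : MorphismProperty D) : MorphismProperty (Arrow D) :=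
  fun a b f =>
    F a.hom ∧ F b.hom ∧ F f.left ∧ F f.right ∧
    ∃ (P : D) (pA : P ⟶ a.right) (pB : P ⟶ b.left) (c : a.left ⟶ P),
      IsPullback pA pB f.right b.hom ∧ c ≫ pA = a.hom ∧ c ≫ pB = f.left ∧ F c

section Helpers

variable {D : Type*} [Category D]

/-- Build an `IsPullback` from an explicit universal property. -/
lemma isPullback_mk {P X Y Z : D} {fst : P ⟶ X} {snd : P ⟶ Y}
    {f : X ⟶ Z} {g : Y ⟶ Z} (w : fst ≫ f = snd ≫ g)
    (lift : ∀ {W : D} (h : W ⟶ X) (k : W ⟶ Y), h ≫ f = k ≫ g → (W ⟶ P))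
    (fac₁ : ∀ {W : D} (h : W ⟶ X) (k : W ⟶ Y) (hw : h ≫ f = k ≫ g), lift h k hw ≫ fst = h)
    (fac₂ : ∀ {W : D} (h : W ⟶ X) (k : W ⟶ Y) (hw : h ≫ f = k ≫ g), lift h k hw ≫ snd = k)
    (uniq : ∀ {W : D} (h : W ⟶ X) (k : W ⟶ Y) (hw : h ≫ f = k ≫ g) (m : W ⟶ P),
      m ≫ fst = h → m ≫ snd = k → m = lift h k hw) :
    IsPullback fst snd f g :=
  IsPullback.of_isLimit (PullbackCone.IsLimit.mk w (fun s => lift s.fst s.snd s.condition)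
    (fun s => fac₁ _ _ _) (fun s => fac₂ _ _ _)
    (fun s m h₁ h₂ => uniq _ _ s.condition m h₁ h₂))

variable (E : MorphismProperty D)

/-- `E` is closed under precomposition with isomorphisms. -/
lemma iso_comp_mem (hE1 : ∀ {X Y : D} (f : X ⟶ Y), IsIso f → E f)
    (hE3 : ∀ {X Y Z : D} (f : X ⟶ Y) (g : Y ⟶ Z), E f → E g → E (f ≫ g))
    {X Y Z : D} (e : X ⟶ Y) (f : Y ⟶ Z) [IsIso e] (hf : E f) : E (e ≫ f) :=
  hE3 e f (hE1 e inferInstance) hf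

/-- Pullback stability: in any pullback square, the side opposite to an `E`-morphism
is in `E`. -/
lemma pb_stable (hE1 : ∀ {X Y : D} (f : X ⟶ Y), IsIso f → E f)
    (hE2 : ∀ {X Y Z : D} (g : Y ⟶ Z) (h : X ⟶ Z), E g →
      ∃ (P : D) (p₁ : P ⟶ X) (p₂ : P ⟶ Y), IsPullback p₁ p₂ h g ∧ E p₁)
    (hE3 : ∀ {X Y Z : D} (f : X ⟶ Y) (g : Y ⟶ Z), E f → E g → E (f ≫ g))
    {P X Y Z : D} {fst : P ⟶ X} {snd : P ⟶ Y} {f : X ⟶ Z} {g : Y ⟶ Z}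
    (h : IsPullback fst snd f g) (hg : E g) : E fst := by
  obtain ⟨P', p₁, p₂, hP, hp⟩ := hE2 g f hg
  have hfst : (h.isoIsPullback _ _ hP).hom ≫ p₁ = fst :=
    h.isoIsPullback_hom_fst _ _ hP
  rw [← hfst]
  exact iso_comp_mem E hE1 hE3 _ _ hp

end Helpers

section ArrowPB

variable {D : Type*} [Category D]

/-- A degreewise pullback in the arrow category is a pullback. -/
lemma arrow_isPullback {a b c : Arrow D} (g : b ⟶ c) (h : a ⟶ c)
    {PL PR : D} {pL₁ : PL ⟶ a.left} {pL₂ : PL ⟶ b.left}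
    {pR₁ : PR ⟶ a.right} {pR₂ : PR ⟶ b.right}
    (hL : IsPullback pL₁ pL₂ h.left g.left) (hR : IsPullback pR₁ pR₂ h.right g.right)
    {Ph : PL ⟶ PR} (w₁ : pL₁ ≫ a.hom = Ph ≫ pR₁) (w₂ : pL₂ ≫ b.hom = Ph ≫ pR₂) :
    IsPullback (Arrow.homMk (w := w₁) : Arrow.mk Ph ⟶ a) (Arrow.homMk (w := w₂)) h g := by
  refine isPullback_mk ?_
    (fun {W} q₁ q₂ hw => Arrow.homMk
      (u := hL.lift q₁.left q₂.left (by rw [← Arrow.comp_left, hw, Arrow.comp_left]))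
      (v := hR.lift q₁.right q₂.right (by rw [← Arrow.comp_right, hw, Arrow.comp_right]))
      (hR.hom_ext (by simp [← w₁, Arrow.w q₁]) (by simp [← w₂, Arrow.w q₂])))
    ?_ ?_ ?_
  · apply Arrow.hom_ext
    · simpa using hL.w
    · simpa using hR.w
  · intro W q₁ q₂ hw
    apply Arrow.hom_ext <;> simp
  · intro W q₁ q₂ hw
    apply Arrow.hom_ext <;> simp
  · intro W q₁ q₂ hw m hm₁ hm₂
    have h₁l : m.left ≫ pL₁ = q₁.left := by rw [← hm₁]; simp
    have h₂l : m.left ≫ pL₂ = q₂.left := by rw [← hm₂]; simp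
    have h₁r : m.right ≫ pR₁ = q₁.right := by rw [← hm₁]; simp
    have h₂r : m.right ≫ pR₂ = q₂.right := by rw [← hm₂]; simp
    apply Arrow.hom_ext
    · apply hL.hom_ext <;> simp [h₁l, h₂l]
    · apply hR.hom_ext <;> simp [h₁r, h₂r]

end ArrowPB

section Ext1PB

variable {D : Type*} [Category D] (E : MorphismProperty D)

/-- Core of (E2) for `(Ext A, E¹)`: the degreewise pullback of a double extension
along a morphism of extensions exists and the projection is a double extension. -/
lemma ext1_pb
    (hE1 : ∀ {X Y : D} (f : X ⟶ Y), IsIso f → E f)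
    (hE2 : ∀ {X Y Z : D} (g : Y ⟶ Z) (h : X ⟶ Z), E g →
      ∃ (P : D) (p₁ : P ⟶ X) (p₂ : P ⟶ Y), IsPullback p₁ p₂ h g ∧ E p₁)
    (hE3 : ∀ {X Y Z : D} (f : X ⟶ Y) (g : Y ⟶ Z), E f → E g → E (f ≫ g))
    {a b c : Arrow D} (g : b ⟶ c) (h : a ⟶ c) (ha : E a.hom) (hg : ext1 E g) :
    ∃ (PL PR : D) (pL₁ : PL ⟶ a.left) (pL₂ : PL ⟶ b.left)
      (pR₁ : PR ⟶ a.right) (pR₂ : PR ⟶ b.right) (Ph : PL ⟶ PR)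
      (w₁ : pL₁ ≫ a.hom = Ph ≫ pR₁) (w₂ : pL₂ ≫ b.hom = Ph ≫ pR₂),
      IsPullback pL₁ pL₂ h.left g.left ∧ IsPullback pR₁ pR₂ h.right g.right ∧
      E Ph ∧
      IsPullback (Arrow.homMk (w := w₁) : Arrow.mk Ph ⟶ a) (Arrow.homMk (w := w₂)) h g ∧
      ext1 E (Arrow.homMk (w := w₁) : Arrow.mk Ph ⟶ a) := by
  obtain ⟨hgb, hgc, hgl, hgr, Pg, gA, gB, q, hPg, hq1, hq2, hqE⟩ := hg
  obtain ⟨PL, pL₁, pL₂, hL, hpL₁⟩ := hE2 g.left h.left hgl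
  obtain ⟨PR, pR₁, pR₂, hR, hpR₁⟩ := hE2 g.right h.right hgr
  have wPh : (pL₁ ≫ a.hom) ≫ h.right = (pL₂ ≫ b.hom) ≫ g.right := by
    simp only [Category.assoc]
    rw [← Arrow.w h, reassoc_of% hL.w, Arrow.w g]
  set Ph : PL ⟶ PR := hR.lift (pL₁ ≫ a.hom) (pL₂ ≫ b.hom) wPh with hPhdef
  have w₁ : pL₁ ≫ a.hom = Ph ≫ pR₁ := (hR.lift_fst _ _ _).symm
  have w₂ : pL₂ ≫ b.hom = Ph ≫ pR₂ := (hR.lift_snd _ _ _).symm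
  -- the pullback `Q` of `a.hom` along `pR₁`, receiving the comparison
  obtain ⟨Q, qA, qB, hQ, hqAE⟩ := hE2 a.hom pR₁ ha
  set cc : PL ⟶ Q := hQ.lift Ph pL₁ w₁.symm with hccdef
  have hcc1 : cc ≫ qA = Ph := hQ.lift_fst _ _ _
  have hcc2 : cc ≫ qB = pL₁ := hQ.lift_snd _ _ _
  have wu : (qA ≫ pR₂) ≫ g.right = (qB ≫ h.left) ≫ c.hom := by
    simp only [Category.assoc]
    rw [← hR.w, reassoc_of% hQ.w, ← Arrow.w h]
  set u : Q ⟶ Pg := hPg.lift (qA ≫ pR₂) (qB ≫ h.left) wu with hudef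
  have hu1 : u ≫ gA = qA ≫ pR₂ := hPg.lift_fst _ _ _
  have hu2 : u ≫ gB = qB ≫ h.left := hPg.lift_snd _ _ _
  -- `cc` is a pullback of the comparison `q` of `g`, hence lies in `E`
  have key : IsPullback cc pL₂ u q := by
    refine isPullback_mk ?_
      (fun {W} z₁ z₂ hz => hL.lift (z₁ ≫ qB) z₂ ?_) ?_ ?_ ?_
    · -- commutativity
      apply hPg.hom_ext
      · simp only [Category.assoc]
        rw [hu1, hq1, reassoc_of% hcc1, ← w₂]
      · simp only [Category.assoc]
        rw [hu2, hq2, reassoc_of% hcc2, hL.w]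
    · -- condition for the lift
      simp only [Category.assoc]
      rw [← hu2, reassoc_of% hz, hq2]
    · -- fac₁
      intro W z₁ z₂ hz
      apply hQ.hom_ext
      · simp only [Category.assoc]
        rw [hcc1]
        apply hR.hom_ext
        · simp only [Category.assoc]
          rw [← w₁]
          simp only [IsPullback.lift_fst_assoc, Category.assoc]
          rw [hQ.w]
        · simp only [Category.assoc]
          rw [← w₂]
          simp only [IsPullback.lift_snd_assoc]
          rw [← hq1, ← reassoc_of% hz, hu1]
      · simp only [Category.assoc]
        rw [hcc2, hL.lift_fst]
    · -- fac₂
      intro W z₁ z₂ hz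
      exact hL.lift_snd _ _ _
    · -- uniqueness
      intro W z₁ z₂ hz m hm₁ hm₂
      apply hL.hom_ext
      · rw [hL.lift_fst, ← hcc2, reassoc_of% hm₁]
      · rw [hL.lift_snd, hm₂]
  have hccE : E cc := pb_stable E hE1 hE2 hE3 key hqE
  have hqAE' : E qA := pb_stable E hE1 hE2 hE3 hQ ha
  have hPhE : E Ph := by rw [← hcc1]; exact hE3 _ _ hccE hqAE'
  refine ⟨PL, PR, pL₁, pL₂, pR₁, pR₂, Ph, w₁, w₂, hL, hR, hPhE,
    arrow_isPullback g h hL hR w₁ w₂, ?_⟩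
  exact ⟨hPhE, ha, pb_stable E hE1 hE2 hE3 hL hgl, pb_stable E hE1 hE2 hE3 hR hgr,
    Q, qA, qB, cc, hQ, hcc1, hcc2, hccE⟩

end Ext1PB

section Ext1CompCancel

variable {D : Type*} [Category D] (E : MorphismProperty D)

/-- (E3) for `(Ext A, E¹)`: double extensions compose. -/
lemma ext1_comp
    (hE1 : ∀ {X Y : D} (f : X ⟶ Y), IsIso f → E f)
    (hE2 : ∀ {X Y Z : D} (g : Y ⟶ Z) (h : X ⟶ Z), E g →
      ∃ (P : D) (p₁ : P ⟶ X) (p₂ : P ⟶ Y), IsPullback p₁ p₂ h g ∧ E p₁)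
    (hE3 : ∀ {X Y Z : D} (f : X ⟶ Y) (g : Y ⟶ Z), E f → E g → E (f ≫ g))
    {a b c : Arrow D} (f : a ⟶ b) (g : b ⟶ c)
    (hf : ext1 E f) (hg : ext1 E g) : ext1 E (f ≫ g) := by
  obtain ⟨ha, hb, hfl, hfr, Pf, fA, fB, cf, hPf, hcf1, hcf2, hcfE⟩ := hf
  obtain ⟨-, hc, hgl, hgr, Pg, gA, gB, q, hPg, hq1, hq2, hqE⟩ := hg
  obtain ⟨P, p₁, p₂, hP, -⟩ := hE2 c.hom (f.right ≫ g.right) hc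
  set m : Pf ⟶ P := hP.lift fA (fB ≫ g.left) (by
    simp only [Category.assoc]
    rw [reassoc_of% hPf.w, ← Arrow.w g]) with hmdef
  have hm1 : m ≫ p₁ = fA := hP.lift_fst _ _ _
  have hm2 : m ≫ p₂ = fB ≫ g.left := hP.lift_snd _ _ _
  set w : P ⟶ Pg := hPg.lift (p₁ ≫ f.right) p₂ (by
    simpa using hP.w) with hwdef
  have hw1 : w ≫ gA = p₁ ≫ f.right := hPg.lift_fst _ _ _
  have hw2 : w ≫ gB = p₂ := hPg.lift_snd _ _ _
  have key : IsPullback m fB w q := by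
    refine isPullback_mk ?_
      (fun {W} z₁ z₂ hz => hPf.lift (z₁ ≫ p₁) z₂ ?_) ?_ ?_ ?_
    · apply hPg.hom_ext
      · simp only [Category.assoc]
        rw [hw1, hq1, reassoc_of% hm1, hPf.w]
      · simp only [Category.assoc]
        rw [hw2, hq2, hm2]
    · simp only [Category.assoc]
      rw [← hw1, reassoc_of% hz, hq1]
    · intro W z₁ z₂ hz
      apply hP.hom_ext
      · simp only [Category.assoc]
        rw [hm1, hPf.lift_fst]
      · simp only [Category.assoc]
        rw [hm2]
        simp only [IsPullback.lift_snd_assoc]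
        rw [← hq2, ← reassoc_of% hz, hw2]
    · intro W z₁ z₂ hz
      exact hPf.lift_snd _ _ _
    · intro W z₁ z₂ hz n hn1 hn2
      apply hPf.hom_ext
      · rw [hPf.lift_fst, ← hm1, reassoc_of% hn1]
      · rw [hPf.lift_snd, hn2]
  have hmE : E m := pb_stable E hE1 hE2 hE3 key hqE
  refine ⟨ha, hc, ?_, ?_, P, p₁, p₂, cf ≫ m, hP, ?_, ?_, hE3 _ _ hcfE hmE⟩
  · exact hE3 _ _ hfl hgl
  · exact hE3 _ _ hfr hgr
  · show (cf ≫ m) ≫ p₁ = a.hom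
    simp only [Category.assoc]
    rw [hm1, hcf1]
  · show (cf ≫ m) ≫ p₂ = f.left ≫ g.left
    simp only [Category.assoc]
    rw [hm2, reassoc_of% hcf2]

/-- (E4) for `(Ext A, E¹)` when the first factor is itself a double extension. -/
lemma ext1_cancel
    (hE1 : ∀ {X Y : D} (f : X ⟶ Y), IsIso f → E f)
    (hE2 : ∀ {X Y Z : D} (g : Y ⟶ Z) (h : X ⟶ Z), E g →
      ∃ (P : D) (p₁ : P ⟶ X) (p₂ : P ⟶ Y), IsPullback p₁ p₂ h g ∧ E p₁)
    (hE3 : ∀ {X Y Z : D} (f : X ⟶ Y) (g : Y ⟶ Z), E f → E g → E (f ≫ g))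
    (hE4 : ∀ {X Y Z : D} (f : X ⟶ Y) (g : Y ⟶ Z), E (f ≫ g) → E g)
    {a b c : Arrow D} (f : a ⟶ b) (g : b ⟶ c)
    (hf : ext1 E f) (hfg : ext1 E (f ≫ g)) : ext1 E g := by
  obtain ⟨-, hb, hfl, hfr, -, -, -, -, -, -, -, -⟩ := hf
  obtain ⟨ha, hc, hfgl, hfgr, P, pA, pB, cfg, hP, h1, h2, hcfgE⟩ := hfg
  replace hP : IsPullback pA pB (f.right ≫ g.right) c.hom := hP
  replace h2 : cfg ≫ pB = f.left ≫ g.left := h2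
  have hgl : E g.left := hE4 f.left g.left hfgl
  have hgr : E g.right := hE4 f.right g.right hfgr
  obtain ⟨Pg, gA, gB, hPg, -⟩ := hE2 c.hom g.right hc
  set q : b.left ⟶ Pg := hPg.lift b.hom g.left (Arrow.w g).symm with hqdef
  have hq1 : q ≫ gA = b.hom := hPg.lift_fst _ _ _
  have hq2 : q ≫ gB = g.left := hPg.lift_snd _ _ _
  set w : P ⟶ Pg := hPg.lift (pA ≫ f.right) pB (by simpa using hP.w) with hwdef
  have hw1 : w ≫ gA = pA ≫ f.right := hPg.lift_fst _ _ _
  have hw2 : w ≫ gB = pB := hPg.lift_snd _ _ _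
  have key : IsPullback pA w f.right gA := by
    refine isPullback_mk hw1.symm
      (fun {W} z₁ z₂ hz => hP.lift z₁ (z₂ ≫ gB) ?_) ?_ ?_ ?_
    · simp only [Category.assoc]
      rw [← hPg.w, ← reassoc_of% hz]
    · intro W z₁ z₂ hz
      exact hP.lift_fst _ _ _
    · intro W z₁ z₂ hz
      apply hPg.hom_ext
      · simp only [Category.assoc]
        rw [hw1]
        simp only [IsPullback.lift_fst_assoc]
        exact hz
      · simp only [Category.assoc]
        rw [hw2, hP.lift_snd]
    · intro W z₁ z₂ hz n hn1 hn2
      apply hP.hom_ext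
      · rw [hP.lift_fst, hn1]
      · rw [hP.lift_snd, ← hw2, reassoc_of% hn2]
  have hwE : E w := pb_stable E hE1 hE2 hE3 key.flip hfr
  have hfact : f.left ≫ q = cfg ≫ w := by
    apply hPg.hom_ext
    · simp only [Category.assoc]
      rw [hq1, hw1, reassoc_of% h1, Arrow.w f]
    · simp only [Category.assoc]
      rw [hq2, hw2, h2]
  have hqE : E q := by
    apply hE4 f.left q
    rw [hfact]
    exact hE3 _ _ hcfgE hwE
  exact ⟨hb, hc, hgl, hgr, Pg, gA, gB, q, hPg, hq1, hq2, hqE⟩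

end Ext1CompCancel

/-- if `(A, E)` satisfies (E1)–(E5) then `(Ext A, E¹)` — the
extensions (arrows with `E`-hom) together with the double extensions — again
satisfies (E1)–(E5): isomorphisms of extensions are double extensions, pullbacks of
double extensions exist in `Ext A` (degreewise) and are double extensions, double
extensions compose, satisfy right cancellation among extensions, and every split
epimorphism of double extensions is a two-fold double extension. -/
theorem stmt6 {C : Type*} [Category C] (E : MorphismProperty C)
    (hE1 : ∀ {X Y : C} (f : X ⟶ Y), IsIso f → E f)
    (hE2 : ∀ {X Y Z : C} (g : Y ⟶ Z) (h : X ⟶ Z), E g →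
      ∃ (P : C) (p₁ : P ⟶ X) (p₂ : P ⟶ Y), IsPullback p₁ p₂ h g ∧ E p₁)
    (hE3 : ∀ {X Y Z : C} (f : X ⟶ Y) (g : Y ⟶ Z), E f → E g → E (f ≫ g))
    (hE4 : ∀ {X Y Z : C} (f : X ⟶ Y) (g : Y ⟶ Z), E (f ≫ g) → E g)
    (hE5 : ∀ {a b : Arrow C} (f : a ⟶ b) (s : b ⟶ a), E a.hom → E b.hom →
      s ≫ f = 𝟙 b → ext1 E f) :
    -- (E1) for (Ext A, E¹)
    (∀ {a b : Arrow C} (f : a ⟶ b), E a.hom → E b.hom → IsIso f → ext1 E f) ∧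
    -- (E2) for (Ext A, E¹): pullbacks of double extensions exist in Ext A and are
    -- double extensions
    (∀ {a b c : Arrow C} (g : b ⟶ c) (h : a ⟶ c), E a.hom → ext1 E g →
      ∃ (P : Arrow C) (p₁ : P ⟶ a) (p₂ : P ⟶ b),
        IsPullback p₁ p₂ h g ∧ E P.hom ∧ ext1 E p₁) ∧
    -- (E3) for (Ext A, E¹)
    (∀ {a b c : Arrow C} (f : a ⟶ b) (g : b ⟶ c),
      ext1 E f → ext1 E g → ext1 E (f ≫ g)) ∧
    -- (E4) for (Ext A, E¹)
    (∀ {a b c : Arrow C} (f : a ⟶ b) (g : b ⟶ c), E b.hom →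
      ext1 E (f ≫ g) → ext1 E g) ∧
    -- (E5) for (Ext A, E¹)
    (∀ {A B : Arrow (Arrow C)} (F : A ⟶ B) (S : B ⟶ A),
      ext1 E A.hom → ext1 E B.hom → S ≫ F = 𝟙 B → ext1 (ext1 E) F) := by
  refine ⟨?_, ?_, ?_, ?_, ?_⟩
  · -- (E1)
    intro a b f ha hb hiso
    haveI := hiso
    refine ⟨ha, hb, hE1 _ inferInstance, hE1 _ inferInstance,
      b.left, b.hom ≫ inv f.right, 𝟙 b.left, f.left, ?_, ?_, ?_⟩
    · refine isPullback_mk (by simp) (fun {W} z₁ z₂ hz => z₂) ?_ ?_ ?_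
      · intro W z₁ z₂ hz
        rw [← Category.assoc, ← hz, Category.assoc, IsIso.hom_inv_id, Category.comp_id]
      · intro W z₁ z₂ hz
        exact Category.comp_id _
      · intro W z₁ z₂ hz n hn1 hn2
        show n = z₂
        rw [← hn2, Category.comp_id]
    · rw [← Category.assoc, Arrow.w f, Category.assoc, IsIso.hom_inv_id, Category.comp_id]
    · exact ⟨Category.comp_id _, hE1 _ inferInstance⟩
  · -- (E2)
    intro a b c g h ha hg
    obtain ⟨PL, PR, pL₁, pL₂, pR₁, pR₂, Ph, w₁, w₂, hL, hR, hPhE, hPB, hp₁⟩ :=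
      ext1_pb E hE1 hE2 hE3 g h ha hg
    exact ⟨Arrow.mk Ph, Arrow.homMk (w := w₁), Arrow.homMk (w := w₂), hPB, hPhE, hp₁⟩
  · -- (E3)
    intro a b c f g hf hg
    exact ext1_comp E hE1 hE2 hE3 f g hf hg
  · -- (E4)
    intro a b c f g hb hfg
    obtain ⟨PL, PR, pL₁, pL₂, pR₁, pR₂, Ph, w₁, w₂, hL, hR, hPhE, hPB, hp₁⟩ :=
      ext1_pb E hE1 hE2 hE3 (f ≫ g) g hb hfg
    have hs : f ≫ g = 𝟙 a ≫ (f ≫ g) := by simp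
    set s : a ⟶ Arrow.mk Ph := hPB.lift f (𝟙 a) hs with hsdef
    have hsplit : s ≫ Arrow.homMk (w := w₂) = 𝟙 a := hPB.lift_snd _ _ _
    have hp₂ : ext1 E (Arrow.homMk (w := w₂) : Arrow.mk Ph ⟶ a) :=
      hE5 _ s hPhE hfg.1 hsplit
    have hcomp : ext1 E ((Arrow.homMk (w := w₂) : Arrow.mk Ph ⟶ a) ≫ (f ≫ g)) :=
      ext1_comp E hE1 hE2 hE3 _ _ hp₂ hfg
    rw [← hPB.w] at hcomp
    exact ext1_cancel E hE1 hE2 hE3 hE4 _ g hp₁ hcomp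
  · -- (E5)
    intro A B F S hA hB hSF
    -- componentwise section equations
    have hSFl : S.left ≫ F.left = 𝟙 B.left := by
      rw [← Arrow.comp_left, hSF, Arrow.id_left]
    have hSFr : S.right ≫ F.right = 𝟙 B.right := by
      rw [← Arrow.comp_right, hSF, Arrow.id_right]
    have hSFll : S.left.left ≫ F.left.left = 𝟙 B.left.left := by
      rw [← Arrow.comp_left, hSFl, Arrow.id_left]
    have hSFlr : S.left.right ≫ F.left.right = 𝟙 B.left.right := by
      rw [← Arrow.comp_right, hSFl, Arrow.id_right]
    have hSFrl : S.right.left ≫ F.right.left = 𝟙 B.right.left := by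
      rw [← Arrow.comp_left, hSFr, Arrow.id_left]
    have hSFrr : S.right.right ≫ F.right.right = 𝟙 B.right.right := by
      rw [← Arrow.comp_right, hSFr, Arrow.id_right]
    -- componentwise naturality
    have wFl : F.left.left ≫ B.hom.left = A.hom.left ≫ F.right.left := by
      rw [← Arrow.comp_left, Arrow.w F, Arrow.comp_left]
    have wFr : F.left.right ≫ B.hom.right = A.hom.right ≫ F.right.right := by
      rw [← Arrow.comp_right, Arrow.w F, Arrow.comp_right]
    have wSl : S.left.left ≫ A.hom.left = B.hom.left ≫ S.right.left := by
      rw [← Arrow.comp_left, Arrow.w S, Arrow.comp_left]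
    have wSr : S.left.right ≫ A.hom.right = B.hom.right ≫ S.right.right := by
      rw [← Arrow.comp_right, Arrow.w S, Arrow.comp_right]
    -- the components of F are double extensions
    have hFl : ext1 E F.left := hE5 F.left S.left hA.1 hB.1 hSFl
    have hFr : ext1 E F.right := hE5 F.right S.right hA.2.1 hB.2.1 hSFr
    obtain ⟨hALh, hARh, hAhl, hAhr, PA, aA, aB, ac, hPA, hac1, hac2, hacE⟩ := id hA
    obtain ⟨hBLh, hBRh, hBhl, hBhr, PB, bA, bB, bc, hPB', hbc1, hbc2, hbcE⟩ := id hB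
    -- the degreewise pullback of F.right along B.hom
    obtain ⟨PL, PR, pL₁, pL₂, pR₁, pR₂, Ph, w₁, w₂, hL, hR, hPhE, hPB, hp₁⟩ :=
      ext1_pb E hE1 hE2 hE3 F.right B.hom hB.1 hFr
    -- the comparison square c
    set c : A.left ⟶ Arrow.mk Ph := hPB.flip.lift A.hom F.left (Arrow.w F).symm with hcdef
    have hc2 : c ≫ Arrow.homMk (w := w₂) = A.hom := hPB.flip.lift_fst _ _ _
    have hc1 : c ≫ Arrow.homMk (w := w₁) = F.left := hPB.flip.lift_snd _ _ _
    have hcl1 : c.left ≫ pL₁ = F.left.left := by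
      have := congrArg CommaMorphism.left hc1; simpa using this
    have hcl2 : c.left ≫ pL₂ = A.hom.left := by
      have := congrArg CommaMorphism.left hc2; simpa using this
    have hcr1 : c.right ≫ pR₁ = F.left.right := by
      have := congrArg CommaMorphism.right hc1; simpa using this
    have hcr2 : c.right ≫ pR₂ = A.hom.right := by
      have := congrArg CommaMorphism.right hc2; simpa using this
    -- E c.left via the transposed split epimorphism square
    have hclE : E c.left := by
      have hGl : ext1 E (Arrow.homMk' (w := wFl)) :=
        hE5 (Arrow.homMk' (w := wFl)) (Arrow.homMk' (w := wSl)) hAhl hBhl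
          (by apply Arrow.hom_ext <;> simp [hSFll, hSFrl])
      obtain ⟨-, -, -, -, P'', pA'', pB'', c'', hP'', h1'', h2'', hcE''⟩ := hGl
      replace hP'' : IsPullback pA'' pB'' F.right.left B.hom.left := hP''
      replace h1'' : c'' ≫ pA'' = A.hom.left := h1''
      replace h2'' : c'' ≫ pB'' = F.left.left := h2''
      have he1 : (hP''.isoIsPullback _ _ hL.flip).hom ≫ pL₂ = pA'' :=
        hP''.isoIsPullback_hom_fst _ _ hL.flip
      have he2 : (hP''.isoIsPullback _ _ hL.flip).hom ≫ pL₁ = pB'' :=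
        hP''.isoIsPullback_hom_snd _ _ hL.flip
      have hfac : c.left = c'' ≫ (hP''.isoIsPullback _ _ hL.flip).hom := by
        apply hL.hom_ext
        · rw [hcl1, Category.assoc, he2, h2'']
        · rw [hcl2, Category.assoc, he1, h1'']
      rw [hfac]
      exact hE3 _ _ hcE'' (hE1 _ inferInstance)
    -- E c.right via the transposed split epimorphism square
    have hcrE : E c.right := by
      have hGr : ext1 E (Arrow.homMk' (w := wFr)) :=
        hE5 (Arrow.homMk' (w := wFr)) (Arrow.homMk' (w := wSr)) hAhr hBhr
          (by apply Arrow.hom_ext <;> simp [hSFlr, hSFrr])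
      obtain ⟨-, -, -, -, P'', pA'', pB'', c'', hP'', h1'', h2'', hcE''⟩ := hGr
      replace hP'' : IsPullback pA'' pB'' F.right.right B.hom.right := hP''
      replace h1'' : c'' ≫ pA'' = A.hom.right := h1''
      replace h2'' : c'' ≫ pB'' = F.left.right := h2''
      have he1 : (hP''.isoIsPullback _ _ hR.flip).hom ≫ pR₂ = pA'' :=
        hP''.isoIsPullback_hom_fst _ _ hR.flip
      have he2 : (hP''.isoIsPullback _ _ hR.flip).hom ≫ pR₁ = pB'' :=
        hP''.isoIsPullback_hom_snd _ _ hR.flip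
      have hfac : c.right = c'' ≫ (hP''.isoIsPullback _ _ hR.flip).hom := by
        apply hR.hom_ext
        · rw [hcr1, Category.assoc, he2, h2'']
        · rw [hcr2, Category.assoc, he1, h1'']
      rw [hfac]
      exact hE3 _ _ hcE'' (hE1 _ inferInstance)
    -- the split epimorphism square between the comparison objects of A.hom and B.hom
    set φ : PA ⟶ PB := hPB'.lift (aA ≫ F.left.right) (aB ≫ F.right.left) (by
      simp only [Category.assoc]
      rw [wFr, reassoc_of% hPA.w, Arrow.w F.right]) with hφdef
    have hφ1 : φ ≫ bA = aA ≫ F.left.right := hPB'.lift_fst _ _ _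
    have hφ2 : φ ≫ bB = aB ≫ F.right.left := hPB'.lift_snd _ _ _
    set ψ : PB ⟶ PA := hPA.lift (bA ≫ S.left.right) (bB ≫ S.right.left) (by
      simp only [Category.assoc]
      rw [wSr, reassoc_of% hPB'.w, Arrow.w S.right]) with hψdef
    have hψ1 : ψ ≫ aA = bA ≫ S.left.right := hPA.lift_fst _ _ _
    have hψ2 : ψ ≫ aB = bB ≫ S.right.left := hPA.lift_snd _ _ _
    have wG : F.left.left ≫ bc = ac ≫ φ := by
      apply hPB'.hom_ext
      · simp only [Category.assoc]
        rw [hbc1, hφ1, reassoc_of% hac1, Arrow.w F.left]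
      · simp only [Category.assoc]
        rw [hbc2, hφ2, reassoc_of% hac2, wFl]
    have wT : S.left.left ≫ ac = bc ≫ ψ := by
      apply hPA.hom_ext
      · simp only [Category.assoc]
        rw [hac1, hψ1, reassoc_of% hbc1, Arrow.w S.left]
      · simp only [Category.assoc]
        rw [hac2, hψ2, reassoc_of% hbc2, wSl]
    have hTG : Arrow.homMk' (w := wT) ≫ Arrow.homMk' (w := wG) = 𝟙 (Arrow.mk bc) := by
      apply Arrow.hom_ext
      · simpa using hSFll
      · show ψ ≫ φ = 𝟙 PB
        apply hPB'.hom_ext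
        · simp only [Category.assoc]
          rw [hφ1, reassoc_of% hψ1, hSFlr, Category.comp_id, Category.id_comp]
        · simp only [Category.assoc]
          rw [hφ2, reassoc_of% hψ2, hSFrl, Category.comp_id, Category.id_comp]
    have hG : ext1 E (Arrow.homMk' (w := wG)) := hE5 (Arrow.homMk' (w := wG)) (Arrow.homMk' (w := wT)) hacE hbcE hTG
    obtain ⟨-, -, -, -, Q', qA', qB', d, hQ', hd1, hd2, hdE⟩ := hG
    replace hQ' : IsPullback qA' qB' φ bc := hQ'
    replace hd1 : d ≫ qA' = ac := hd1
    replace hd2 : d ≫ qB' = F.left.left := hd2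
    set v : Q' ⟶ PL := hL.lift qB' (qA' ≫ aB) (by
      simp only [Category.assoc]
      rw [← hφ2, reassoc_of% hQ'.w, hbc2]) with hvdef
    have hv1 : v ≫ pL₁ = qB' := hL.lift_fst _ _ _
    have hv2 : v ≫ pL₂ = qA' ≫ aB := hL.lift_snd _ _ _
    have hQmain : IsPullback (qA' ≫ aA) v c.right Ph := by
      refine isPullback_mk ?_
        (fun {W} z₁ z₂ hz => hQ'.lift (hPA.lift z₁ (z₂ ≫ pL₂) ?_) (z₂ ≫ pL₁) ?_) ?_ ?_ ?_
      · -- commutativity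
        apply hR.hom_ext
        · simp only [Category.assoc]
          rw [hcr1, ← hφ1, reassoc_of% hQ'.w, hbc1, ← w₁, reassoc_of% hv1]
        · simp only [Category.assoc]
          rw [hcr2, hPA.w, ← w₂, reassoc_of% hv2]
      · -- condition for the inner lift
        simp only [Category.assoc]
        calc z₁ ≫ A.hom.right = z₁ ≫ c.right ≫ pR₂ := by rw [hcr2]
          _ = z₂ ≫ Ph ≫ pR₂ := by rw [reassoc_of% hz]
          _ = z₂ ≫ pL₂ ≫ A.right.hom := by rw [← w₂]
      · -- condition for the outer lift
        apply hPB'.hom_ext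
        · simp only [Category.assoc]
          rw [hφ1]
          simp only [IsPullback.lift_fst_assoc]
          rw [hbc1]
          calc z₁ ≫ F.left.right = z₁ ≫ c.right ≫ pR₁ := by rw [hcr1]
            _ = z₂ ≫ Ph ≫ pR₁ := by rw [reassoc_of% hz]
            _ = z₂ ≫ pL₁ ≫ B.left.hom := by rw [← w₁]
        · simp only [Category.assoc]
          rw [hφ2]
          simp only [IsPullback.lift_snd_assoc]
          rw [hbc2]
          simp only [Category.assoc]
          rw [← hL.w]
      · -- fac₁
        intro W z₁ z₂ hz
        simp
      · -- fac₂
        intro W z₁ z₂ hz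
        apply hL.hom_ext
        · simp only [Category.assoc]
          rw [hv1, hQ'.lift_snd]
        · simp only [Category.assoc]
          rw [hv2]
          simp only [IsPullback.lift_fst_assoc]
          rw [hPA.lift_snd]
      · -- uniqueness
        intro W z₁ z₂ hz n hn1 hn2
        apply hQ'.hom_ext
        · rw [hQ'.lift_fst]
          apply hPA.hom_ext
          · rw [Category.assoc, hn1, hPA.lift_fst]
          · rw [Category.assoc, ← hv2, reassoc_of% hn2, hPA.lift_snd]
        · rw [hQ'.lift_snd, ← hv1, reassoc_of% hn2]
    have hd_u : d ≫ (qA' ≫ aA) = A.left.hom := by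
      rw [← Category.assoc, hd1, hac1]
    have hd_v : d ≫ v = c.left := by
      apply hL.hom_ext
      · rw [Category.assoc, hv1, hd2, hcl1]
      · rw [Category.assoc, hv2, ← Category.assoc, hd1, hac2, hcl2]
    have hcExt : ext1 E c :=
      ⟨hALh, hPhE, hclE, hcrE, Q', qA' ≫ aA, v, d, hQmain, hd_u, hd_v, hdE⟩
    exact ⟨hA, hB, hFl, hFr, Arrow.mk Ph, Arrow.homMk (w := w₂), Arrow.homMk (w := w₁),
      c, hPB.flip, hc2, hc1, hcExt⟩
end

section
/- Let A be a finitely complete category satisfying: every split epimorphism of split epimorphisms (a commutative square of split epimorphisms in both directions, with compatible splittings) has the property that the comparison morphism to the pullback is a strong epimorphism. If moreover A has pushouts of split monomorphisms, then A is weakly Mal'tsev: in any pullback square of split epimorphisms, the two induced splittings into the pullback object are jointly epimorphic. -/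
open CategoryTheory CategoryTheory.Limits

/-- Let `A` be finitely complete such that for every split epimorphism
of split epimorphisms the comparison morphism to the pullback is a strong
epimorphism. If `A` has pushouts of split monomorphisms, then `A` is weakly
Mal'tsev: in any pullback of a cospan of split epimorphisms, the two induced
splittings into the pullback object are jointly epimorphic. -/
theorem stmt7 {C : Type*} [Category C] [HasFiniteLimits C]
    (hpush : ∀ {X Y Z : C} (f : X ⟶ Y) (g : X ⟶ Z),
      IsSplitMono f → IsSplitMono g → HasPushout f g)
    (hE5 : ∀ {A₁ A₀ B₁ B₀ : C} (a : A₁ ⟶ A₀) (b : B₁ ⟶ B₀)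
      (f₁ : A₁ ⟶ B₁) (f₀ : A₀ ⟶ B₀)
      (ta : A₀ ⟶ A₁) (tb : B₀ ⟶ B₁) (s₁ : B₁ ⟶ A₁) (s₀ : B₀ ⟶ A₀)
      (w : f₁ ≫ b = a ≫ f₀),
      s₁ ≫ a = b ≫ s₀ → ta ≫ f₁ = f₀ ≫ tb → s₀ ≫ ta = tb ≫ s₁ →
      s₁ ≫ f₁ = 𝟙 B₁ → s₀ ≫ f₀ = 𝟙 B₀ → ta ≫ a = 𝟙 A₀ → tb ≫ b = 𝟙 B₀ →
      StrongEpi (pullback.lift a f₁ w.symm : A₁ ⟶ pullback f₀ b))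
    -- a pullback of split epimorphisms:
    {A₀ B₁ B₀ : C} (f₀ : A₀ ⟶ B₀) (b : B₁ ⟶ B₀)
    (s₀ : B₀ ⟶ A₀) (tb : B₀ ⟶ B₁) (hs₀ : s₀ ≫ f₀ = 𝟙 B₀) (htb : tb ≫ b = 𝟙 B₀)
    {P : C} (pA : P ⟶ A₀) (pB : P ⟶ B₁) (hP : IsPullback pA pB f₀ b)
    -- the two induced splittings into the pullback:
    (j₁ : A₀ ⟶ P) (hj₁A : j₁ ≫ pA = 𝟙 A₀) (hj₁B : j₁ ≫ pB = f₀ ≫ tb)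
    (j₂ : B₁ ⟶ P) (hj₂A : j₂ ≫ pA = b ≫ s₀) (hj₂B : j₂ ≫ pB = 𝟙 B₁)
    -- jointly epimorphic:
    {Q : C} (u v : P ⟶ Q) (h₁ : j₁ ≫ u = j₁ ≫ v) (h₂ : j₂ ≫ u = j₂ ≫ v) :
    u = v := by
  haveI : HasPushout s₀ tb := hpush s₀ tb
    (IsSplitMono.mk' ⟨f₀, hs₀⟩) (IsSplitMono.mk' ⟨b, htb⟩)
  set D := pushout s₀ tb
  have ha : s₀ ≫ (𝟙 A₀) = tb ≫ (b ≫ s₀) := by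
    rw [Category.comp_id, ← Category.assoc, htb, Category.id_comp]
  have hf : s₀ ≫ (f₀ ≫ tb) = tb ≫ 𝟙 B₁ := by
    rw [Category.comp_id, ← Category.assoc, hs₀, Category.id_comp]
  set a : D ⟶ A₀ := pushout.desc (𝟙 A₀) (b ≫ s₀) ha with ha_def
  set f₁ : D ⟶ B₁ := pushout.desc (f₀ ≫ tb) (𝟙 B₁) hf with hf_def
  have w : f₁ ≫ b = a ≫ f₀ := by
    apply pushout.hom_ext
    · simp [pushout.inl_desc, pushout.inr_desc, pushout.inl_desc_assoc, pushout.inr_desc_assoc, ha_def, hf_def, htb]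
    · simp [pushout.inl_desc, pushout.inr_desc, pushout.inl_desc_assoc, pushout.inr_desc_assoc, ha_def, hf_def, hs₀]
  have hk : s₀ ≫ j₁ = tb ≫ j₂ := by
    apply hP.hom_ext
    · rw [Category.assoc, Category.assoc, hj₁A, hj₂A, Category.comp_id,
        ← Category.assoc, htb, Category.id_comp]
    · rw [Category.assoc, Category.assoc, hj₁B, hj₂B, Category.comp_id,
        ← Category.assoc, hs₀, Category.id_comp]
  set k : D ⟶ P := pushout.desc j₁ j₂ hk with hk_def
  have hse : StrongEpi (pullback.lift a f₁ w.symm : D ⟶ pullback f₀ b) := by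
    apply hE5 a b f₁ f₀ (pushout.inl _ _) tb (pushout.inr _ _) s₀ w
    · simp [pushout.inl_desc, pushout.inr_desc, pushout.inl_desc_assoc, pushout.inr_desc_assoc, ha_def]
    · simp [pushout.inl_desc, pushout.inr_desc, pushout.inl_desc_assoc, pushout.inr_desc_assoc, hf_def]
    · exact pushout.condition
    · simp [pushout.inl_desc, pushout.inr_desc, pushout.inl_desc_assoc, pushout.inr_desc_assoc, hf_def]
    · exact hs₀
    · simp [pushout.inl_desc, pushout.inr_desc, pushout.inl_desc_assoc, pushout.inr_desc_assoc, ha_def]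
    · exact htb
  have hkeq : k = (pullback.lift a f₁ w.symm : D ⟶ pullback f₀ b) ≫ hP.isoPullback.inv := by
    apply hP.hom_ext
    · apply pushout.hom_ext
      · simp [pullback.lift_fst, pullback.lift_snd, pushout.inl_desc, pushout.inr_desc, pushout.inl_desc_assoc, pushout.inr_desc_assoc, hk_def, hj₁A, ha_def, IsPullback.isoPullback_inv_fst]
      · simp [pullback.lift_fst, pullback.lift_snd, pushout.inl_desc, pushout.inr_desc, pushout.inl_desc_assoc, pushout.inr_desc_assoc, hk_def, hj₂A, ha_def, IsPullback.isoPullback_inv_fst]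
    · apply pushout.hom_ext
      · simp [pullback.lift_fst, pullback.lift_snd, pushout.inl_desc, pushout.inr_desc, pushout.inl_desc_assoc, pushout.inr_desc_assoc, hk_def, hj₁B, hf_def, IsPullback.isoPullback_inv_snd]
      · simp [pullback.lift_fst, pullback.lift_snd, pushout.inl_desc, pushout.inr_desc, pushout.inl_desc_assoc, pushout.inr_desc_assoc, hk_def, hj₂B, hf_def, IsPullback.isoPullback_inv_snd]
  have hke : Epi k := by
    rw [hkeq]
    haveI := hse
    exact epi_comp _ _
  have : k ≫ u = k ≫ v := by
    apply pushout.hom_ext <;> simp [pushout.inl_desc, pushout.inr_desc, pushout.inl_desc_assoc, pushout.inr_desc_assoc, hk_def, h₁, h₂]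
  exact (cancel_epi k).mp this
end

section
/- Let A be a finitely complete category in which every commutative square of split epimorphisms in both directions (with compatible splittings) is a double extension with respect to a class E of epimorphisms, and suppose A has equalisers. Then in any pullback of split epimorphisms, the two canonical splittings into the pullback object are jointly epimorphic. -/
open CategoryTheory CategoryTheory.Limits

/-- Let `A` be finitely complete (in particular with equalisers), and
let `E` be a class of epimorphisms such that every commutative square of split
epimorphisms in both directions (with compatible splittings) is a double extension
with respect to `E` (all four sides and the comparison to the pullback are in `E`).
Then in any pullback of a cospan of split epimorphisms, the two canonical
splittings into the pullback object are jointly epimorphic. -/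
theorem stmt8 {C : Type*} [Category C] [HasFiniteLimits C]
    (E : MorphismProperty C)
    (hepi : ∀ {X Y : C} (f : X ⟶ Y), E f → Epi f)
    (hE5 : ∀ {A₁ A₀ B₁ B₀ : C} (a : A₁ ⟶ A₀) (b : B₁ ⟶ B₀)
      (f₁ : A₁ ⟶ B₁) (f₀ : A₀ ⟶ B₀)
      (ta : A₀ ⟶ A₁) (tb : B₀ ⟶ B₁) (s₁ : B₁ ⟶ A₁) (s₀ : B₀ ⟶ A₀)
      (w : f₁ ≫ b = a ≫ f₀),
      s₁ ≫ a = b ≫ s₀ → ta ≫ f₁ = f₀ ≫ tb → s₀ ≫ ta = tb ≫ s₁ →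
      s₁ ≫ f₁ = 𝟙 B₁ → s₀ ≫ f₀ = 𝟙 B₀ → ta ≫ a = 𝟙 A₀ → tb ≫ b = 𝟙 B₀ →
      E f₁ ∧ E a ∧ E b ∧ E f₀ ∧
        E (pullback.lift a f₁ w.symm : A₁ ⟶ pullback f₀ b))
    -- a pullback of split epimorphisms:
    {A₀ B₁ B₀ : C} (f₀ : A₀ ⟶ B₀) (b : B₁ ⟶ B₀)
    (s₀ : B₀ ⟶ A₀) (tb : B₀ ⟶ B₁) (hs₀ : s₀ ≫ f₀ = 𝟙 B₀) (htb : tb ≫ b = 𝟙 B₀)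
    {P : C} (pA : P ⟶ A₀) (pB : P ⟶ B₁) (hP : IsPullback pA pB f₀ b)
    -- the two canonical splittings into the pullback:
    (j₁ : A₀ ⟶ P) (hj₁A : j₁ ≫ pA = 𝟙 A₀) (hj₁B : j₁ ≫ pB = f₀ ≫ tb)
    (j₂ : B₁ ⟶ P) (hj₂A : j₂ ≫ pA = b ≫ s₀) (hj₂B : j₂ ≫ pB = 𝟙 B₁)
    -- jointly epimorphic:
    {Q : C} (u v : P ⟶ Q) (h₁ : j₁ ≫ u = j₁ ≫ v) (h₂ : j₂ ≫ u = j₂ ≫ v) :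
    u = v := by

  -- equaliser of u and v
  let e : equalizer u v ⟶ P := equalizer.ι u v
  -- factor j₁ and j₂ through e
  let ta : A₀ ⟶ equalizer u v := equalizer.lift j₁ h₁
  let s₁ : B₁ ⟶ equalizer u v := equalizer.lift j₂ h₂
  have hta : ta ≫ e = j₁ := equalizer.lift_ι _ _
  have hs₁ : s₁ ≫ e = j₂ := equalizer.lift_ι _ _
  -- the downward square
  have w : (e ≫ pB) ≫ b = (e ≫ pA) ≫ f₀ := by
    rw [Category.assoc, Category.assoc, hP.w]
  have hcompat : s₀ ≫ ta = tb ≫ s₁ := by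
    rw [← cancel_mono e, Category.assoc, Category.assoc, hta, hs₁]
    apply hP.hom_ext
    · rw [Category.assoc, Category.assoc, hj₁A, hj₂A, ← Category.assoc, htb,
        Category.comp_id, Category.id_comp]
    · rw [Category.assoc, Category.assoc, hj₁B, hj₂B, ← Category.assoc, hs₀,
        Category.comp_id, Category.id_comp]
  obtain ⟨-, -, -, -, hc⟩ := hE5 (e ≫ pA) b (e ≫ pB) f₀ ta tb s₁ s₀ w
    (by rw [← Category.assoc, hs₁, hj₂A])
    (by rw [← Category.assoc, hta, hj₁B])
    hcompat
    (by rw [← Category.assoc, hs₁, hj₂B])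
    hs₀
    (by rw [← Category.assoc, hta, hj₁A])
    htb
  have hcepi : Epi (pullback.lift (e ≫ pA) (e ≫ pB) w.symm :
      equalizer u v ⟶ pullback f₀ b) := hepi _ hc
  have heq : e = (pullback.lift (e ≫ pA) (e ≫ pB) w.symm :
      equalizer u v ⟶ pullback f₀ b) ≫ hP.isoPullback.inv := by
    apply hP.hom_ext
    · rw [Category.assoc, IsPullback.isoPullback_inv_fst, pullback.lift_fst]
    · rw [Category.assoc, IsPullback.isoPullback_inv_snd, pullback.lift_snd]
  have hepie : Epi e := by rw [heq]; exact epi_comp _ _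
  have : IsIso e := isIso_of_epi_of_strongMono e
  rw [← cancel_epi e]
  exact equalizer.condition u v
end

section
/- In the category of topological groups with E the class of morphisms admitting a continuous (not necessarily homomorphic) section, the following holds: given a ∈ E with kernel K[a], b ∈ E with kernel K[b], a morphism f with b∘f = a, and a morphism k : K[a] → K[b] restricting f, if k admits a continuous section then f admits a continuous section. -/
/-- In the category of topological groups with `E` the class of
morphisms admitting a continuous (not necessarily homomorphic) section: given
`a : A₁ → A₀` in `E`, `b : B → A₀` in `E`, a morphism `f : A₁ → B` with `b ∘ f = a`
and the restriction `k : K[a] → K[b]` of `f` between the kernels, if `k` admits a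
continuous section then `f` admits a continuous section. -/
theorem stmt9 {A₁ A₀ B : Type*}
    [Group A₁] [TopologicalSpace A₁] [IsTopologicalGroup A₁]
    [Group A₀] [TopologicalSpace A₀] [IsTopologicalGroup A₀]
    [Group B] [TopologicalSpace B] [IsTopologicalGroup B]
    (a : A₁ →* A₀) (ha : Continuous a)
    (b : B →* A₀) (hb : Continuous b)
    (f : A₁ →* B) (hf : Continuous f)
    (hcomm : ∀ x : A₁, b (f x) = a x)
    -- a admits a continuous section s:
    (s : A₀ → A₁) (hs : Continuous s) (has : ∀ x : A₀, a (s x) = x)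
    -- b admits a continuous section t:
    (t : A₀ → B) (ht : Continuous t) (hbt : ∀ x : A₀, b (t x) = x)
    -- the restriction k of f to the kernels admits a continuous section u:
    (u : b.ker → a.ker) (hu : Continuous u)
    (hku : ∀ x : b.ker, f ((u x : A₁)) = (x : B)) :
    ∃ σ : B → A₁, Continuous σ ∧ ∀ β : B, f (σ β) = β := by
  have hker : ∀ β : B, β * (f (s (b β)))⁻¹ ∈ b.ker := by
    intro β
    simp [MonoidHom.mem_ker, hcomm, has]
  refine ⟨fun β => (u ⟨β * (f (s (b β)))⁻¹, hker β⟩ : A₁) * s (b β), ?_, ?_⟩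
  · apply Continuous.mul
    · exact continuous_subtype_val.comp (hu.comp (Continuous.subtype_mk
        (continuous_id.mul ((hf.comp (hs.comp hb)).inv)) _))
    · exact hs.comp hb
  · intro β
    simp [hku]
end

section
/- In the category of sets equipped with both a group structure and a topology (with no compatibility assumed), with morphisms the continuous group homomorphisms, the canonical morphism Z + Z → Z × Z from the coproduct to the product of two copies of the integers (where Z carries the indiscrete topology, the coproduct carries the final topology for the coproduct inclusions, and the product the indiscrete topology) is not a regular epimorphism: the topology on Z × Z is not the quotient topology induced from Z + Z. -/
/-- The topology of the coproduct `ℤ + ℤ` (the free group on `Bool`, i.e. the free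
product of two copies of `ℤ`): the final topology for the two coproduct inclusions
`n ↦ (of true)^n` and `n ↦ (of false)^n`, where each copy of `ℤ` carries the
indiscrete topology `⊤`. -/
noncomputable def coprodTop : TopologicalSpace (FreeGroup Bool) :=
  TopologicalSpace.coinduced (fun n : ℤ => FreeGroup.of true ^ n)
      (⊤ : TopologicalSpace ℤ) ⊔
    TopologicalSpace.coinduced (fun n : ℤ => FreeGroup.of false ^ n)
      (⊤ : TopologicalSpace ℤ)

/-- The canonical comparison morphism `ℤ + ℤ → ℤ × ℤ` from the coproduct to the
product, induced by the two product inclusions of `ℤ` into `ℤ × ℤ` (written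
multiplicatively). -/
noncomputable def comparison : FreeGroup Bool →* Multiplicative ℤ × Multiplicative ℤ :=
  FreeGroup.lift (fun b : Bool =>
    if b then (Multiplicative.ofAdd (1 : ℤ), (1 : Multiplicative ℤ))
    else ((1 : Multiplicative ℤ), Multiplicative.ofAdd (1 : ℤ)))

/-- in the category of sets with a group structure and a topology (no
compatibility assumed), the canonical morphism `ℤ + ℤ → ℤ × ℤ` is not a regular
epimorphism: the (indiscrete) product topology on `ℤ × ℤ` is not the quotient
topology coinduced from the coproduct topology on `ℤ + ℤ`. -/
theorem stmt12 :
    TopologicalSpace.coinduced (⇑comparison) coprodTop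
      ≠ (⊤ : TopologicalSpace (Multiplicative ℤ × Multiplicative ℤ)) := by
  intro h
  -- The witness set: pairs with at least one trivial coordinate.
  set V : Set (Multiplicative ℤ × Multiplicative ℤ) := {p | p.1 = 1 ∨ p.2 = 1} with hVdef
  have h1 : comparison (FreeGroup.of true) = (Multiplicative.ofAdd (1 : ℤ), 1) := by
    simp [comparison]
  have h2 : comparison (FreeGroup.of false) = (1, Multiplicative.ofAdd (1 : ℤ)) := by
    simp [comparison]
  -- V is open in the coinduced topology.
  have hV : @IsOpen _ (TopologicalSpace.coinduced (⇑comparison) coprodTop) V := by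
    rw [isOpen_coinduced, coprodTop, isOpen_sup, isOpen_coinduced, isOpen_coinduced]
    constructor
    · have : (fun n : ℤ => FreeGroup.of true ^ n) ⁻¹' (⇑comparison ⁻¹' V) = Set.univ := by
        ext n
        simp only [Set.mem_preimage, Set.mem_univ, iff_true, hVdef, Set.mem_setOf_eq,
          map_zpow, h1]
        right
        simp
      rw [this]; exact @isOpen_univ _ ⊤
    · have : (fun n : ℤ => FreeGroup.of false ^ n) ⁻¹' (⇑comparison ⁻¹' V) = Set.univ := by
        ext n
        simp only [Set.mem_preimage, Set.mem_univ, iff_true, hVdef, Set.mem_setOf_eq,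
          map_zpow, h2]
        left
        simp
      rw [this]; exact @isOpen_univ _ ⊤
  rw [h] at hV
  rcases (TopologicalSpace.isOpen_top_iff V).mp hV with hE | hU
  · have : ((1 : Multiplicative ℤ), (1 : Multiplicative ℤ)) ∈ V := by left; rfl
    rw [hE] at this
    exact this
  · have : (Multiplicative.ofAdd (1 : ℤ), Multiplicative.ofAdd (1 : ℤ)) ∈ V := by
      rw [hU]; trivial
    rcases this with h' | h' <;> exact absurd (congrArg Multiplicative.toAdd h') (by decide)
end

section
/- Let A be a category and E a class of morphisms satisfying (E1)–(E4), and suppose that every split epimorphism of split epimorphisms in A is a double extension. Then E¹, the class of double extensions, also satisfies (E4): if a composite of morphisms of extensions is a double extension, then the second factor is a double extension. -/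
open CategoryTheory CategoryTheory.Limits

private lemma exists_pullback' {C : Type*} [Category C] (E : MorphismProperty C)
    (h2 : ∀ {X Y Z : C} (f : X ⟶ Z) (g : Y ⟶ Z), E f → HasPullback g f)
    {X₁ X₂ Y : C} (f : X₁ ⟶ Y) (g : X₂ ⟶ Y) (hg : E g) :
    ∃ (T : C) (t₁ : T ⟶ X₁) (t₂ : T ⟶ X₂), IsPullback t₁ t₂ f g := by
  haveI := h2 g f hg
  exact ⟨pullback f g, pullback.fst f g, pullback.snd f g, IsPullback.of_hasPullback f g⟩

/-- if `(A, E)` satisfies (E1)–(E4) and every split epimorphism of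
split epimorphisms is a double extension, then the class `E¹` of double extensions
satisfies (E4): if a composite of morphisms of extensions is a double extension,
then the second factor is a double extension. -/
theorem stmt13 {C : Type*} [Category C] (E : MorphismProperty C)
    (hE1 : ∀ {X Y : C} (f : X ⟶ Y), IsIso f → E f)
    (hE2exists : ∀ {X Y Z : C} (f : X ⟶ Z) (g : Y ⟶ Z), E f → HasPullback g f)
    (hE2stable : ∀ {P X Y Z : C} (fst : P ⟶ X) (snd : P ⟶ Y) (f : X ⟶ Z) (g : Y ⟶ Z),
      IsPullback fst snd f g → E g → E fst)
    (hE3 : ∀ {X Y Z : C} (f : X ⟶ Y) (g : Y ⟶ Z), E f → E g → E (f ≫ g))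
    (hE4 : ∀ {X Y Z : C} (f : X ⟶ Y) (g : Y ⟶ Z), E (f ≫ g) → E g)
    (hE5 : ∀ {A₁ A₀ B₁ B₀ : C} (a : A₁ ⟶ A₀) (b : B₁ ⟶ B₀)
      (f₁ : A₁ ⟶ B₁) (f₀ : A₀ ⟶ B₀)
      (ta : A₀ ⟶ A₁) (tb : B₀ ⟶ B₁) (s₁ : B₁ ⟶ A₁) (s₀ : B₀ ⟶ A₀),
      f₁ ≫ b = a ≫ f₀ → s₁ ≫ a = b ≫ s₀ → ta ≫ f₁ = f₀ ≫ tb → s₀ ≫ ta = tb ≫ s₁ →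
      s₁ ≫ f₁ = 𝟙 B₁ → s₀ ≫ f₀ = 𝟙 B₀ → ta ≫ a = 𝟙 A₀ → tb ≫ b = 𝟙 B₀ →
      IsDblExt E f₁ a b f₀) :
    ∀ {A₁ A₀ B₁ B₀ C₁ C₀ : C} (a : A₁ ⟶ A₀) (b : B₁ ⟶ B₀) (c : C₁ ⟶ C₀)
      (f₁ : A₁ ⟶ B₁) (f₀ : A₀ ⟶ B₀) (g₁ : B₁ ⟶ C₁) (g₀ : B₀ ⟶ C₀),
      E a → E b → E c → f₁ ≫ b = a ≫ f₀ → g₁ ≫ c = b ≫ g₀ →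
      IsDblExt E (f₁ ≫ g₁) a c (f₀ ≫ g₀) → IsDblExt E g₁ b c g₀ := by
  intro A₁ A₀ B₁ B₀ C₁ C₀ a b c f₁ f₀ g₁ g₀ ha hb hc hf hg hcomp
  obtain ⟨hh₁, -, -, hh₀, P, pA, pC, d, hPB, hdA, hdC, hd⟩ := hcomp
  have hg₁ : E g₁ := hE4 f₁ g₁ hh₁
  have hg₀ : E g₀ := hE4 f₀ g₀ hh₀
  have hfg : (f₁ ≫ g₁) ≫ c = a ≫ (f₀ ≫ g₀) := by
    rw [Category.assoc, hg, ← Category.assoc, hf, Category.assoc]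
  have hfg2 : f₁ ≫ g₁ ≫ c = a ≫ f₀ ≫ g₀ := by rw [← Category.assoc]; exact hfg
  -- the pullback Q = B₀ ×_{C₀} C₁ and the comparison map e
  obtain ⟨Q, qB, qC, hQ⟩ := exists_pullback' E hE2exists g₀ c hc
  have EqB : E qB := hE2stable qB qC g₀ c hQ hc
  obtain ⟨e, heB, heC⟩ : ∃ e : B₁ ⟶ Q, e ≫ qB = b ∧ e ≫ qC = g₁ :=
    ⟨hQ.lift b g₁ hg.symm, hQ.lift_fst b g₁ hg.symm, hQ.lift_snd b g₁ hg.symm⟩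
  refine ⟨hg₁, hb, hc, hg₀, Q, qB, qC, e, hQ, heB, heC, ?_⟩
  -- remaining goal : E e
  have EpC : E pC := hE2stable pC pA c (f₀ ≫ g₀) hPB.flip hh₀
  -- T₁ = B₁ ×_{B₀} Q
  obtain ⟨T₁, u₁, tQ, hT₁⟩ := exists_pullback' E hE2exists b qB EqB
  have EtQ : E tQ := hE2stable tQ u₁ qB b hT₁.flip hb
  -- T₂ = T₁ ×_{C₁} P
  obtain ⟨T₂, v₁, rP, hT₂⟩ := exists_pullback' E hE2exists (tQ ≫ qC) pC EpC
  have Ev₁ : E v₁ := hE2stable v₁ rP (tQ ≫ qC) pC hT₂ EpC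
  -- T₃ = T₂ ×_P A₁ along d
  obtain ⟨T₃, v₂, x, hT₃⟩ := exists_pullback' E hE2exists rP d hd
  have Ev₂ : E v₂ := hE2stable v₂ x rP d hT₃ hd
  -- θ : T₃ ⟶ P
  obtain ⟨θ, hθA, hθC⟩ : ∃ θ : T₃ ⟶ P,
      θ ≫ pA = v₂ ≫ rP ≫ pA ∧ θ ≫ pC = v₂ ≫ v₁ ≫ u₁ ≫ g₁ := by
    have w : (v₂ ≫ rP ≫ pA) ≫ (f₀ ≫ g₀) = (v₂ ≫ v₁ ≫ u₁ ≫ g₁) ≫ c := by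
      simp only [Category.assoc]
      rw [hPB.w, hg, reassoc_of% hT₁.w, hQ.w, ← reassoc_of% hT₂.w]
    exact ⟨hPB.lift _ _ w, hPB.lift_fst _ _ w, hPB.lift_snd _ _ w⟩
  -- T₄ = T₃ ×_P A₁ along d (second lift)
  obtain ⟨T₄, v₃, x', hT₄⟩ := exists_pullback' E hE2exists θ d hd
  have Ev₃ : E v₃ := hE2stable v₃ x' θ d hT₄ hd
  -- U = B₁ ×_{C₁} A₁
  obtain ⟨U, pU1, pU2, hU⟩ := exists_pullback' E hE2exists g₁ (f₁ ≫ g₁) hh₁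
  -- kernel pairs
  obtain ⟨Ea, fa, sa, hEa⟩ := exists_pullback' E hE2exists a a ha
  obtain ⟨Eb, fb, sb, hEb⟩ := exists_pullback' E hE2exists b b hb
  -- G_A
  obtain ⟨GA, fG, sG, hGA⟩ :=
    exists_pullback' E hE2exists (g₁ ≫ c) ((f₁ ≫ g₁) ≫ c) (hE3 (f₁ ≫ g₁) c hh₁ hc)
  -- γ : GA ⟶ P
  obtain ⟨γ, hγA, hγC⟩ : ∃ γ : GA ⟶ P, γ ≫ pA = sG ≫ a ∧ γ ≫ pC = fG ≫ g₁ := by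
    have w : (sG ≫ a) ≫ (f₀ ≫ g₀) = (fG ≫ g₁) ≫ c := by
      simp only [Category.assoc]
      rw [← hfg, ← hGA.w]
    exact ⟨hPB.lift _ _ w, hPB.lift_fst _ _ w, hPB.lift_snd _ _ w⟩
  -- P₁ = GA ×_P A₁ along d
  obtain ⟨P₁, δ₁, δ₂, hP₁⟩ := exists_pullback' E hE2exists γ d hd
  have Eδ₁ : E δ₁ := hE2stable δ₁ δ₂ γ d hP₁ hd
  -- P₂ = Eb ×_{C₁} A₁
  obtain ⟨P₂, ε₁, ε₂, hP₂⟩ := exists_pullback' E hE2exists (sb ≫ g₁) (f₁ ≫ g₁) hh₁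
  -- ψ : P₂ ⟶ GA
  obtain ⟨ψ, hψf, hψs⟩ : ∃ ψ : P₂ ⟶ GA, ψ ≫ fG = ε₁ ≫ fb ∧ ψ ≫ sG = ε₂ := by
    have w : (ε₁ ≫ fb) ≫ (g₁ ≫ c) = ε₂ ≫ ((f₁ ≫ g₁) ≫ c) := by
      simp only [Category.assoc]
      rw [hg, reassoc_of% hEb.w, ← hg, reassoc_of% hP₂.w]
    exact ⟨hGA.lift _ _ w, hGA.lift_fst _ _ w, hGA.lift_snd _ _ w⟩
  -- W = P₂ ×_{GA} P₁
  obtain ⟨W, w₁, w₂, hWpb⟩ := exists_pullback' E hE2exists ψ δ₁ Eδ₁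
  -- derived equations for P₁
  have hδa : δ₂ ≫ a = δ₁ ≫ sG ≫ a := by
    rw [← hγA, ← hdA, ← Category.assoc, ← hP₁.w, Category.assoc]
  have hδc : δ₂ ≫ (f₁ ≫ g₁) = δ₁ ≫ fG ≫ g₁ := by
    rw [← hγC, ← hdC, ← Category.assoc, ← hP₁.w, Category.assoc]
  -- t : W ⟶ Ea
  obtain ⟨t, htf, hts⟩ : ∃ t : W ⟶ Ea, t ≫ fa = w₂ ≫ δ₂ ∧ t ≫ sa = w₂ ≫ δ₁ ≫ sG := by
    have w : (w₂ ≫ δ₂) ≫ a = (w₂ ≫ δ₁ ≫ sG) ≫ a := by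
      simp only [Category.assoc]; rw [hδa]
    exact ⟨hEa.lift _ _ w, hEa.lift_fst _ _ w, hEa.lift_snd _ _ w⟩
  -- l : W ⟶ U
  obtain ⟨l, hlf, hls⟩ : ∃ l : W ⟶ U, l ≫ pU1 = w₁ ≫ ε₁ ≫ fb ∧ l ≫ pU2 = w₂ ≫ δ₂ := by
    have w : (w₁ ≫ ε₁ ≫ fb) ≫ g₁ = (w₂ ≫ δ₂) ≫ (f₁ ≫ g₁) := by
      simp only [Category.assoc]
      rw [hδc, ← reassoc_of% hψf, reassoc_of% hWpb.w]
    exact ⟨hU.lift _ _ w, hU.lift_fst _ _ w, hU.lift_snd _ _ w⟩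
  -- diagonals and section of U
  obtain ⟨Δa, hΔaf, hΔas⟩ : ∃ Δa : A₁ ⟶ Ea, Δa ≫ fa = 𝟙 A₁ ∧ Δa ≫ sa = 𝟙 A₁ :=
    ⟨hEa.lift (𝟙 A₁) (𝟙 A₁) rfl, hEa.lift_fst _ _ rfl, hEa.lift_snd _ _ rfl⟩
  obtain ⟨Δb, hΔbf, hΔbs⟩ : ∃ Δb : B₁ ⟶ Eb, Δb ≫ fb = 𝟙 B₁ ∧ Δb ≫ sb = 𝟙 B₁ :=
    ⟨hEb.lift (𝟙 B₁) (𝟙 B₁) rfl, hEb.lift_fst _ _ rfl, hEb.lift_snd _ _ rfl⟩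
  obtain ⟨sU, hsU1, hsU2⟩ : ∃ sU : A₁ ⟶ U, sU ≫ pU1 = f₁ ∧ sU ≫ pU2 = 𝟙 A₁ := by
    have w : f₁ ≫ g₁ = 𝟙 A₁ ≫ (f₁ ≫ g₁) := by simp
    exact ⟨hU.lift _ _ w, hU.lift_fst _ _ w, hU.lift_snd _ _ w⟩
  -- section of t : Ea ⟶ W
  obtain ⟨EbL, hEbL1, hEbL2⟩ : ∃ EbL : Ea ⟶ Eb, EbL ≫ fb = fa ≫ f₁ ∧ EbL ≫ sb = sa ≫ f₁ := by
    have w : (fa ≫ f₁) ≫ b = (sa ≫ f₁) ≫ b := by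
      simp only [Category.assoc]; rw [hf, ← Category.assoc, hEa.w, Category.assoc]
    exact ⟨hEb.lift _ _ w, hEb.lift_fst _ _ w, hEb.lift_snd _ _ w⟩
  obtain ⟨GAl, hGAl1, hGAl2⟩ : ∃ GAl : Ea ⟶ GA, GAl ≫ fG = fa ≫ f₁ ∧ GAl ≫ sG = sa := by
    have w : (fa ≫ f₁) ≫ (g₁ ≫ c) = sa ≫ ((f₁ ≫ g₁) ≫ c) := by
      simp only [Category.assoc]
      rw [hfg2, reassoc_of% hEa.w]
    exact ⟨hGA.lift _ _ w, hGA.lift_fst _ _ w, hGA.lift_snd _ _ w⟩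
  obtain ⟨sP₂, hsP₂1, hsP₂2⟩ : ∃ sP₂ : Ea ⟶ P₂, sP₂ ≫ ε₁ = EbL ∧ sP₂ ≫ ε₂ = sa := by
    have w : EbL ≫ (sb ≫ g₁) = sa ≫ (f₁ ≫ g₁) := by
      rw [← Category.assoc, hEbL2, Category.assoc]
    exact ⟨hP₂.lift _ _ w, hP₂.lift_fst _ _ w, hP₂.lift_snd _ _ w⟩
  obtain ⟨sP₁, hsP₁1, hsP₁2⟩ : ∃ sP₁ : Ea ⟶ P₁, sP₁ ≫ δ₁ = GAl ∧ sP₁ ≫ δ₂ = fa := by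
    have w : GAl ≫ γ = fa ≫ d := by
      apply hPB.hom_ext
      · simp only [Category.assoc]
        rw [hγA, hdA, hEa.w, reassoc_of% hGAl2]
      · simp only [Category.assoc]
        rw [hγC, hdC, reassoc_of% hGAl1]
    exact ⟨hP₁.lift _ _ w, hP₁.lift_fst _ _ w, hP₁.lift_snd _ _ w⟩
  obtain ⟨sect, hsect1, hsect2⟩ : ∃ s : Ea ⟶ W, s ≫ w₁ = sP₂ ∧ s ≫ w₂ = sP₁ := by
    have w : sP₂ ≫ ψ = sP₁ ≫ δ₁ := by
      rw [hsP₁1]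
      apply hGA.hom_ext
      · rw [Category.assoc, hψf, ← Category.assoc, hsP₂1, hEbL1, hGAl1]
      · rw [Category.assoc, hψs, hsP₂2, hGAl2]
    exact ⟨hWpb.lift _ _ w, hWpb.lift_fst _ _ w, hWpb.lift_snd _ _ w⟩
  -- section of l : U ⟶ W
  obtain ⟨GAu, hGAu1, hGAu2⟩ : ∃ GAu : U ⟶ GA, GAu ≫ fG = pU1 ∧ GAu ≫ sG = pU2 := by
    have w : pU1 ≫ (g₁ ≫ c) = pU2 ≫ ((f₁ ≫ g₁) ≫ c) := by
      rw [← Category.assoc, hU.w, Category.assoc]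
    exact ⟨hGA.lift _ _ w, hGA.lift_fst _ _ w, hGA.lift_snd _ _ w⟩
  obtain ⟨uP₂, huP₂1, huP₂2⟩ : ∃ uP₂ : U ⟶ P₂, uP₂ ≫ ε₁ = pU1 ≫ Δb ∧ uP₂ ≫ ε₂ = pU2 := by
    have w : (pU1 ≫ Δb) ≫ (sb ≫ g₁) = pU2 ≫ (f₁ ≫ g₁) := by
      rw [Category.assoc, ← Category.assoc Δb, hΔbs, Category.id_comp, hU.w]
    exact ⟨hP₂.lift _ _ w, hP₂.lift_fst _ _ w, hP₂.lift_snd _ _ w⟩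
  obtain ⟨uP₁, huP₁1, huP₁2⟩ : ∃ uP₁ : U ⟶ P₁, uP₁ ≫ δ₁ = GAu ∧ uP₁ ≫ δ₂ = pU2 := by
    have w : GAu ≫ γ = pU2 ≫ d := by
      apply hPB.hom_ext
      · rw [Category.assoc, hγA, ← Category.assoc, hGAu2, Category.assoc, hdA]
      · rw [Category.assoc, hγC, ← Category.assoc, hGAu1, Category.assoc, hdC, hU.w]
    exact ⟨hP₁.lift _ _ w, hP₁.lift_fst _ _ w, hP₁.lift_snd _ _ w⟩
  obtain ⟨secl, hsecl1, hsecl2⟩ : ∃ s : U ⟶ W, s ≫ w₁ = uP₂ ∧ s ≫ w₂ = uP₁ := by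
    have w : uP₂ ≫ ψ = uP₁ ≫ δ₁ := by
      rw [huP₁1]
      apply hGA.hom_ext
      · rw [Category.assoc, hψf, ← Category.assoc, huP₂1, hGAu1, Category.assoc, hΔbf,
          Category.comp_id]
      · rw [Category.assoc, hψs, huP₂2, hGAu2]
    exact ⟨hWpb.lift _ _ w, hWpb.lift_fst _ _ w, hWpb.lift_snd _ _ w⟩
  -- apply hE5 to the split epimorphism of split epimorphisms
  have hDE : IsDblExt E t l fa pU2 := by
    apply hE5 l fa t pU2 secl Δa sect sU
    · rw [htf, hls]
    · -- sect ≫ l = fa ≫ sU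
      apply hU.hom_ext
      · rw [Category.assoc, hlf, ← Category.assoc, hsect1, ← Category.assoc, hsP₂1,
          hEbL1, Category.assoc, hsU1]
      · rw [Category.assoc, hls, ← Category.assoc, hsect2, hsP₁2, Category.assoc, hsU2,
          Category.comp_id]
    · -- secl ≫ t = pU2 ≫ Δa
      apply hEa.hom_ext
      · rw [Category.assoc, htf, ← Category.assoc, hsecl2, huP₁2, Category.assoc, hΔaf,
          Category.comp_id]
      · rw [Category.assoc, hts, ← Category.assoc, hsecl2, ← Category.assoc, huP₁1,
          hGAu2, Category.assoc, hΔas, Category.comp_id]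
    · -- sU ≫ secl = Δa ≫ sect
      apply hWpb.hom_ext
      · rw [Category.assoc, hsecl1, Category.assoc, hsect1]
        apply hP₂.hom_ext
        · rw [Category.assoc, huP₂1, Category.assoc, hsP₂1, ← Category.assoc, hsU1]
          apply hEb.hom_ext
          · rw [Category.assoc, hΔbf, Category.comp_id, Category.assoc, hEbL1,
              ← Category.assoc, hΔaf, Category.id_comp]
          · rw [Category.assoc, hΔbs, Category.comp_id, Category.assoc, hEbL2,
              ← Category.assoc, hΔas, Category.id_comp]
        · rw [Category.assoc, huP₂2, hsU2, Category.assoc, hsP₂2, hΔas]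
      · rw [Category.assoc, hsecl2, Category.assoc, hsect2]
        apply hP₁.hom_ext
        · rw [Category.assoc, huP₁1, Category.assoc, hsP₁1]
          apply hGA.hom_ext
          · rw [Category.assoc, hGAu1, hsU1, Category.assoc, hGAl1, ← Category.assoc,
              hΔaf, Category.id_comp]
          · rw [Category.assoc, hGAu2, hsU2, Category.assoc, hGAl2, hΔas]
        · rw [Category.assoc, huP₁2, hsU2, Category.assoc, hsP₁2, hΔaf]
    · -- sect ≫ t = 𝟙
      apply hEa.hom_ext
      · rw [Category.assoc, htf, ← Category.assoc, hsect2, hsP₁2, Category.id_comp]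
      · rw [Category.assoc, hts, ← Category.assoc, hsect2, ← Category.assoc, hsP₁1,
          hGAl2, Category.id_comp]
    · exact hsU2
    · -- secl ≫ l = 𝟙
      apply hU.hom_ext
      · rw [Category.assoc, hlf, ← Category.assoc, hsecl1, ← Category.assoc, huP₂1,
          Category.assoc, hΔbf, Category.comp_id, Category.id_comp]
      · rw [Category.assoc, hls, ← Category.assoc, hsecl2, huP₁2, Category.id_comp]
    · exact hΔaf
  obtain ⟨-, -, -, -, PP, p₁, p₂, cc, hPP, hcl, hct, Ecc⟩ := hDE
  -- map from T₄ into PP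
  obtain ⟨τU, hτU1, hτU2⟩ : ∃ τU : T₄ ⟶ U,
      τU ≫ pU1 = v₃ ≫ v₂ ≫ v₁ ≫ u₁ ∧ τU ≫ pU2 = x' := by
    have w : (v₃ ≫ v₂ ≫ v₁ ≫ u₁) ≫ g₁ = x' ≫ (f₁ ≫ g₁) := by
      simp only [Category.assoc]
      rw [← hdC, ← reassoc_of% hT₄.w, hθC]
    exact ⟨hU.lift _ _ w, hU.lift_fst _ _ w, hU.lift_snd _ _ w⟩
  obtain ⟨τE, hτE1, hτE2⟩ : ∃ τE : T₄ ⟶ Ea, τE ≫ fa = x' ∧ τE ≫ sa = v₃ ≫ x := by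
    have w : x' ≫ a = (v₃ ≫ x) ≫ a := by
      simp only [Category.assoc]
      rw [← hdA, ← reassoc_of% hT₄.w, hθA, ← reassoc_of% hT₃.w]
    exact ⟨hEa.lift _ _ w, hEa.lift_fst _ _ w, hEa.lift_snd _ _ w⟩
  obtain ⟨τ, hτ1, hτ2⟩ : ∃ τ : T₄ ⟶ PP, τ ≫ p₁ = τU ∧ τ ≫ p₂ = τE := by
    have w : τU ≫ pU2 = τE ≫ fa := by rw [hτU2, hτE1]
    exact ⟨hPP.lift _ _ w, hPP.lift_fst _ _ w, hPP.lift_snd _ _ w⟩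
  -- Z = T₄ ×_{PP} W along cc
  obtain ⟨Z, ζ₁, ζ₂, hZ⟩ := exists_pullback' E hE2exists τ cc Ecc
  have Eζ₁ : E ζ₁ := hE2stable ζ₁ ζ₂ τ cc hZ Ecc
  have idl : ζ₂ ≫ l = ζ₁ ≫ τU := by
    rw [← hcl, ← Category.assoc, ← hZ.w, Category.assoc, hτ1]
  have idt : ζ₂ ≫ t = ζ₁ ≫ τE := by
    rw [← hct, ← Category.assoc, ← hZ.w, Category.assoc, hτ2]
  -- the final factorisation
  have h3 : w₁ ≫ ε₂ = t ≫ sa := by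
    rw [hts, ← hψs, reassoc_of% hWpb.w]
  have final : (ζ₂ ≫ w₁ ≫ ε₁ ≫ sb) ≫ e = ζ₁ ≫ v₃ ≫ v₂ ≫ v₁ ≫ tQ := by
    apply hQ.hom_ext
    · simp only [Category.assoc]
      rw [heB, ← hEb.w, ← hT₁.w, ← reassoc_of% hlf, reassoc_of% idl, reassoc_of% hτU1]
    · simp only [Category.assoc]
      rw [heC, hP₂.w, reassoc_of% h3, reassoc_of% idt, reassoc_of% hτE2, ← hdC,
        ← reassoc_of% hT₃.w, hT₂.w]
  have Eze : E ((ζ₂ ≫ w₁ ≫ ε₁ ≫ sb) ≫ e) := by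
    rw [final]
    exact hE3 _ _ Eζ₁ (hE3 _ _ Ev₃ (hE3 _ _ Ev₂ (hE3 _ _ Ev₁ EtQ)))
  exact hE4 _ e Eze
end

section
/- Let A be a naturally Mal'tsev category (every pullback square of split epimorphisms, viewed downward, is also a pushout of the corresponding split monomorphisms, viewed upward). Then with E the class of all split epimorphisms of A, every split epimorphism of split epimorphisms is a double extension: the comparison morphism to the pullback is a split epimorphism. -/
open CategoryTheory CategoryTheory.Limits

/-- let `A` be naturally Mal'tsev, in the form: every downward
pullback square of split epimorphisms (with compatible splittings) is an upward
pushout of the corresponding split monomorphisms. Then, with `E` the class of split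
epimorphisms, every split epimorphism of split epimorphisms is a double extension:
the comparison morphism to the pullback is a split epimorphism. -/
theorem stmt14 {C : Type*} [Category C]
    (hNat : ∀ {A₁ A₀ B₁ B₀ : C} (a : A₁ ⟶ A₀) (b : B₁ ⟶ B₀)
      (f₁ : A₁ ⟶ B₁) (f₀ : A₀ ⟶ B₀)
      (ta : A₀ ⟶ A₁) (tb : B₀ ⟶ B₁) (s₁ : B₁ ⟶ A₁) (s₀ : B₀ ⟶ A₀),
      f₁ ≫ b = a ≫ f₀ → s₁ ≫ a = b ≫ s₀ → ta ≫ f₁ = f₀ ≫ tb → s₀ ≫ ta = tb ≫ s₁ →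
      s₁ ≫ f₁ = 𝟙 B₁ → s₀ ≫ f₀ = 𝟙 B₀ → ta ≫ a = 𝟙 A₀ → tb ≫ b = 𝟙 B₀ →
      IsPullback f₁ a b f₀ → IsPushout s₀ tb ta s₁)
    -- a split epimorphism of split epimorphisms:
    {A₁ A₀ B₁ B₀ : C} (a : A₁ ⟶ A₀) (b : B₁ ⟶ B₀)
    (f₁ : A₁ ⟶ B₁) (f₀ : A₀ ⟶ B₀)
    (ta : A₀ ⟶ A₁) (tb : B₀ ⟶ B₁) (s₁ : B₁ ⟶ A₁) (s₀ : B₀ ⟶ A₀)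
    (w : f₁ ≫ b = a ≫ f₀) (w₂ : s₁ ≫ a = b ≫ s₀) (w₃ : ta ≫ f₁ = f₀ ≫ tb)
    (w₄ : s₀ ≫ ta = tb ≫ s₁)
    (e₁ : s₁ ≫ f₁ = 𝟙 B₁) (e₂ : s₀ ≫ f₀ = 𝟙 B₀) (e₃ : ta ≫ a = 𝟙 A₀)
    (e₄ : tb ≫ b = 𝟙 B₀)
    -- the pullback of the cospan of split epimorphisms exists:
    {P : C} (pA : P ⟶ A₀) (pB : P ⟶ B₁) (hP : IsPullback pA pB f₀ b)
    -- the comparison morphism to the pullback: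
    (c : A₁ ⟶ P) (hcA : c ≫ pA = a) (hcB : c ≫ pB = f₁) :
    IsSplitEpi c := by
  -- splittings of the pullback projections
  have hcomm : pA ≫ f₀ = pB ≫ b := hP.w
  let s₁' : A₀ ⟶ P := hP.lift (𝟙 A₀) (f₀ ≫ tb) (by simp [e₄])
  let ta' : B₁ ⟶ P := hP.lift (b ≫ s₀) (𝟙 B₁) (by simp [e₂])
  have hs₁'A : s₁' ≫ pA = 𝟙 A₀ := hP.lift_fst _ _ _
  have hs₁'B : s₁' ≫ pB = f₀ ≫ tb := hP.lift_snd _ _ _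
  have hta'A : ta' ≫ pA = b ≫ s₀ := hP.lift_fst _ _ _
  have hta'B : ta' ≫ pB = 𝟙 B₁ := hP.lift_snd _ _ _
  have hsq : s₀ ≫ s₁' = tb ≫ ta' := by
    apply hP.hom_ext
    · simp [hs₁'A, hta'A, reassoc_of% e₄]
    · simp [hs₁'B, hta'B, reassoc_of% e₂]
  have hPO : IsPushout tb s₀ ta' s₁' :=
    hNat pB f₀ pA b ta' s₀ s₁' tb hcomm hs₁'B hta'A hsq.symm hs₁'A e₄ hta'B e₂ hP
  -- the retraction of c via the pushout
  let r : P ⟶ A₁ := hPO.desc s₁ ta w₄.symm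
  have hr₁ : ta' ≫ r = s₁ := hPO.inl_desc _ _ _
  have hr₂ : s₁' ≫ r = ta := hPO.inr_desc _ _ _
  refine ⟨⟨r, ?_⟩⟩
  apply hPO.hom_ext
  · rw [← Category.assoc, hr₁]
    apply hP.hom_ext
    · simp [hcA, w₂, hta'A]
    · simp [hcB, e₁, hta'B]
  · rw [← Category.assoc, hr₂]
    apply hP.hom_ext
    · simp [hcA, e₃, hs₁'A]
    · simp [hcB, w₃, hs₁'B]
end

section
/- Let A be a regular category and consider the class E of regular epimorphisms. Suppose every commutative square of split epimorphisms in both directions (with compatible splittings) is a double extension (the comparison to the pullback is a regular epimorphism). Then, given a reflexive graph structure realised as a split epimorphism of split epimorphisms arising from a pullback along regular epimorphisms, the induced comparison of kernel pairs r : R[f₁] → R[f₀] is a regular epimorphism whenever the square (f₁, f₀) with vertical regular epimorphisms a, b is a double extension. -/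
open CategoryTheory CategoryTheory.Limits

section Aux
variable {C : Type*} [Category C]

/-- A regular epimorphism composed with an isomorphism is a regular epimorphism. -/
noncomputable def regularEpi_comp_isIso {X I Z : C} (e : X ⟶ I) (m : I ⟶ Z) (he : RegularEpi e) [IsIso m] :
    RegularEpi (e ≫ m) where
  W := he.W
  left := he.left
  right := he.right
  w := by rw [he.w_assoc]
  isColimit := by
    refine Cofork.IsColimit.mk _
      (fun s => inv m ≫ (he.desc' s.π s.condition).1) (fun s => ?_) (fun s n hn => ?_)
    · have hl := (he.desc' s.π s.condition).2
      show (e ≫ m) ≫ inv m ≫ _ = _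
      rw [Category.assoc, IsIso.hom_inv_id_assoc, hl]
    · have hl := (he.desc' s.π s.condition).2
      haveI := RegularEpi.epi e he
      have h1 : e ≫ m ≫ n = e ≫ (he.desc' s.π s.condition).1 := by
        rw [hl, ← Category.assoc]; exact hn
      rw [cancel_epi e] at h1
      show n = inv m ≫ (he.desc' s.π s.condition).1
      rw [← h1, IsIso.inv_hom_id_assoc]

variable [HasFiniteLimits C]

/-- In a finitely complete category with coequalizers of kernel pairs and pullback-stable
regular epimorphisms, every strong epimorphism is regular. -/
lemma regularEpi_of_strongEpi_aux
    (hcoeq : ∀ {X Y : C} (f : X ⟶ Y),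
      HasCoequalizer (pullback.fst f f) (pullback.snd f f))
    (hstable : ∀ {P X Y Z : C} (fst : P ⟶ X) (snd : P ⟶ Y) (f : X ⟶ Z) (g : Y ⟶ Z),
      IsPullback fst snd f g → Nonempty (RegularEpi g) → Nonempty (RegularEpi fst))
    {X Z : C} (h : X ⟶ Z) [StrongEpi h] : Nonempty (RegularEpi h) := by
  haveI : HasCoequalizer (pullback.fst h h) (pullback.snd h h) := hcoeq h
  set p : pullback h h ⟶ X := pullback.fst h h with hp
  set q : pullback h h ⟶ X := pullback.snd h h with hq
  set e : X ⟶ coequalizer p q := coequalizer.π p q with he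
  set m : coequalizer p q ⟶ Z := coequalizer.desc h pullback.condition with hm
  have hem : e ≫ m = h := coequalizer.π_desc _ _
  -- the comparison from the kernel pair of h to the kernel pair of m
  have hcond : (p ≫ e) ≫ m = (q ≫ e) ≫ m := by
    simp only [Category.assoc, hem]; exact pullback.condition
  set φ : pullback h h ⟶ pullback m m := pullback.lift (p ≫ e) (q ≫ e) hcond with hφdef
  -- factor φ as two pullbacks of e
  have hM1 : (pullback.fst h m ≫ e) ≫ m = pullback.snd h m ≫ m := by
    simp only [Category.assoc, hem]; exact pullback.condition
  set φ₂ : pullback h m ⟶ pullback m m :=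
    pullback.lift (pullback.fst h m ≫ e) (pullback.snd h m) hM1 with hφ₂
  have hM2 : p ≫ h = (q ≫ e) ≫ m := by
    simp only [Category.assoc, hem]; exact pullback.condition
  set φ₁ : pullback h h ⟶ pullback h m := pullback.lift p (q ≫ e) hM2 with hφ₁
  have hφ : φ = φ₁ ≫ φ₂ := by
    apply pullback.hom_ext <;> simp [hφdef, hφ₁, hφ₂, pullback.lift_fst, pullback.lift_snd, pullback.lift_fst_assoc, pullback.lift_snd_assoc]
  -- φ₁ is a pullback of e
  have pb₁ : IsPullback φ₁ q (pullback.snd h m) e := by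
    refine IsPullback.of_isLimit' ⟨by simp [hφ₁, pullback.lift_fst, pullback.lift_snd, pullback.lift_fst_assoc, pullback.lift_snd_assoc]⟩ ?_
    refine PullbackCone.IsLimit.mk _ (fun s => pullback.lift (s.fst ≫ pullback.fst h m) s.snd ?_)
      (fun s => ?_) (fun s => ?_) (fun s w h1 h2 => ?_)
    · have h4 : pullback.fst h m ≫ e ≫ m = pullback.snd h m ≫ m := by
        rw [hem]; exact pullback.condition
      calc (s.fst ≫ pullback.fst h m) ≫ h = s.fst ≫ pullback.fst h m ≫ e ≫ m := by
            rw [hem, Category.assoc]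
        _ = s.fst ≫ pullback.snd h m ≫ m := by rw [h4]
        _ = (s.fst ≫ pullback.snd h m) ≫ m := by rw [Category.assoc]
        _ = (s.snd ≫ e) ≫ m := by rw [s.condition]
        _ = s.snd ≫ h := by rw [Category.assoc, hem]
    · apply pullback.hom_ext
      · simp [hφ₁, hp, pullback.lift_fst, pullback.lift_snd, pullback.lift_fst_assoc, pullback.lift_snd_assoc]
      · simp only [Category.assoc, hφ₁, pullback.lift_snd]
        rw [← Category.assoc, pullback.lift_snd, s.condition]
    · simp [hq, pullback.lift_fst, pullback.lift_snd, pullback.lift_fst_assoc, pullback.lift_snd_assoc]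
    · apply pullback.hom_ext
      · rw [pullback.lift_fst, ← h1]
        try simp [hφ₁, hp, pullback.lift_fst, pullback.lift_snd, pullback.lift_fst_assoc, pullback.lift_snd_assoc]
      · rw [pullback.lift_snd, ← h2]
        try rfl
  -- φ₂ is a pullback of e
  have pb₂ : IsPullback φ₂ (pullback.fst h m) (pullback.fst m m) e := by
    refine IsPullback.of_isLimit' ⟨by simp [hφ₂, pullback.lift_fst, pullback.lift_snd, pullback.lift_fst_assoc, pullback.lift_snd_assoc]⟩ ?_
    refine PullbackCone.IsLimit.mk _ (fun s => pullback.lift s.snd (s.fst ≫ pullback.snd m m) ?_)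
      (fun s => ?_) (fun s => ?_) (fun s w h1 h2 => ?_)
    · calc s.snd ≫ h = s.snd ≫ e ≫ m := by rw [hem]
        _ = (s.fst ≫ pullback.fst m m) ≫ m := by rw [← Category.assoc, ← s.condition]
        _ = s.fst ≫ pullback.snd m m ≫ m := by rw [Category.assoc, pullback.condition]
        _ = (s.fst ≫ pullback.snd m m) ≫ m := by rw [Category.assoc]
    · apply pullback.hom_ext
      · simp only [Category.assoc, hφ₂, pullback.lift_fst]
        rw [← Category.assoc, pullback.lift_fst, s.condition]
      · simp [hφ₂, pullback.lift_fst, pullback.lift_snd, pullback.lift_fst_assoc, pullback.lift_snd_assoc]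
    · simp [pullback.lift_fst, pullback.lift_snd, pullback.lift_fst_assoc, pullback.lift_snd_assoc]
    · apply pullback.hom_ext
      · rw [pullback.lift_fst, ← h2]
        try rfl
      · rw [pullback.lift_snd, ← h1]
        try simp [hφ₂, pullback.lift_fst, pullback.lift_snd, pullback.lift_fst_assoc, pullback.lift_snd_assoc]
  have hre : RegularEpi e := by rw [he]; exact IsRegularEpi.getStruct _
  obtain ⟨re₁⟩ := hstable _ _ _ _ pb₁ ⟨hre⟩
  obtain ⟨re₂⟩ := hstable _ _ _ _ pb₂ ⟨hre⟩
  haveI := isRegularEpi_of_regularEpi re₁; haveI := isRegularEpi_of_regularEpi re₂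
  have hφepi : Epi φ := by rw [hφ]; infer_instance
  -- the two projections of the kernel pair of m agree
  have hproj : (pullback.fst m m : pullback m m ⟶ _) = pullback.snd m m := by
    rw [← cancel_epi φ]
    simp only [hφdef, pullback.lift_fst, pullback.lift_snd]
    exact coequalizer.condition p q
  -- hence m is mono
  haveI : Mono m := by
    constructor
    intro W u v huv
    have h1 := pullback.lift_fst u v huv
    have h2 := pullback.lift_snd u v huv
    have h3 : pullback.lift u v huv ≫ pullback.fst m m = pullback.lift u v huv ≫ pullback.snd m m :=
      congrArg _ hproj
    rw [h1, h2] at h3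
    exact h3
  haveI : StrongEpi m := by
    haveI : StrongEpi (e ≫ m) := by rw [hem]; infer_instance
    exact strongEpi_of_strongEpi e m
  haveI : IsIso m := isIso_of_mono_of_strongEpi m
  exact ⟨hem ▸ regularEpi_comp_isIso e m hre⟩

end Aux

/-- in a regular category (finitely complete, coequalisers of kernel
pairs, pullback-stable regular epimorphisms) in which every split epimorphism of
split epimorphisms is a double extension with respect to the regular epimorphisms,
given a commutative square of regular epimorphisms `f₁ : A₁ → B₁`, `f₀ : A₀ → B₀`
(horizontal) and `a, b` (vertical) which is a double extension (the comparison
`⟨a, f₁⟩` to the pullback is a regular epimorphism), the induced comparison of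
kernel pairs `r : R[f₁] → R[f₀]` is a regular epimorphism. -/
theorem stmt16 {C : Type*} [Category C] [HasFiniteLimits C]
    (hcoeq : ∀ {X Y : C} (f : X ⟶ Y),
      HasCoequalizer (pullback.fst f f) (pullback.snd f f))
    (hstable : ∀ {P X Y Z : C} (fst : P ⟶ X) (snd : P ⟶ Y) (f : X ⟶ Z) (g : Y ⟶ Z),
      IsPullback fst snd f g → Nonempty (RegularEpi g) → Nonempty (RegularEpi fst))
    (hE5 : ∀ {A₁ A₀ B₁ B₀ : C} (a : A₁ ⟶ A₀) (b : B₁ ⟶ B₀)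
      (f₁ : A₁ ⟶ B₁) (f₀ : A₀ ⟶ B₀)
      (ta : A₀ ⟶ A₁) (tb : B₀ ⟶ B₁) (s₁ : B₁ ⟶ A₁) (s₀ : B₀ ⟶ A₀)
      (w : f₁ ≫ b = a ≫ f₀),
      s₁ ≫ a = b ≫ s₀ → ta ≫ f₁ = f₀ ≫ tb → s₀ ≫ ta = tb ≫ s₁ →
      s₁ ≫ f₁ = 𝟙 B₁ → s₀ ≫ f₀ = 𝟙 B₀ → ta ≫ a = 𝟙 A₀ → tb ≫ b = 𝟙 B₀ →
      Nonempty (RegularEpi (pullback.lift a f₁ w.symm : A₁ ⟶ pullback f₀ b)))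
    {A₁ A₀ B₁ B₀ : C} (f₁ : A₁ ⟶ B₁) (f₀ : A₀ ⟶ B₀) (a : A₁ ⟶ A₀) (b : B₁ ⟶ B₀)
    (hf₁ : Nonempty (RegularEpi f₁)) (hf₀ : Nonempty (RegularEpi f₀))
    (ha : Nonempty (RegularEpi a)) (hb : Nonempty (RegularEpi b))
    (w : f₁ ≫ b = a ≫ f₀)
    (hdbl : Nonempty (RegularEpi (pullback.lift a f₁ w.symm : A₁ ⟶ pullback f₀ b))) :
    Nonempty (RegularEpi (pullback.map f₁ f₁ f₀ f₀ a a b w w :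
      pullback f₁ f₁ ⟶ pullback f₀ f₀)) := by
  -- the comparison morphism of the double extension
  have cψ : (pullback.fst f₁ f₁ : pullback f₁ f₁ ⟶ _) ≫ a ≫ f₀
      = (pullback.snd f₁ f₁ ≫ a) ≫ f₀ := by
    calc (pullback.fst f₁ f₁ : pullback f₁ f₁ ⟶ _) ≫ a ≫ f₀
        = (pullback.fst f₁ f₁ ≫ f₁) ≫ b := by rw [← w, Category.assoc]
      _ = (pullback.snd f₁ f₁ ≫ f₁) ≫ b := by rw [pullback.condition]
      _ = (pullback.snd f₁ f₁ ≫ a) ≫ f₀ := by rw [Category.assoc, Category.assoc, w]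
  -- middle object T := pullback (a ≫ f₀) f₀ and the two factors of r
  set ψ : pullback f₁ f₁ ⟶ pullback (a ≫ f₀) f₀ :=
    pullback.lift (pullback.fst f₁ f₁) (pullback.snd f₁ f₁ ≫ a) cψ with hψ
  have cρ : (pullback.fst (a ≫ f₀) f₀ ≫ a) ≫ f₀
      = (pullback.snd (a ≫ f₀) f₀ : _ ⟶ A₀) ≫ f₀ := by
    rw [Category.assoc, ← pullback.condition]
  set ρ : pullback (a ≫ f₀) f₀ ⟶ pullback f₀ f₀ :=
    pullback.lift (pullback.fst (a ≫ f₀) f₀ ≫ a) (pullback.snd (a ≫ f₀) f₀) cρ with hρ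
  have hr : (pullback.map f₁ f₁ f₀ f₀ a a b w w : pullback f₁ f₁ ⟶ pullback f₀ f₀) = ψ ≫ ρ := by
    apply pullback.hom_ext <;> simp [hψ, hρ, pullback.lift_fst, pullback.lift_snd, pullback.lift_fst_assoc, pullback.lift_snd_assoc]
  -- ψ is a pullback of the comparison c := ⟨a, f₁⟩
  have cτ : (pullback.snd (a ≫ f₀) f₀ : _ ⟶ A₀) ≫ f₀
      = (pullback.fst (a ≫ f₀) f₀ ≫ f₁) ≫ b := by
    calc (pullback.snd (a ≫ f₀) f₀ : _ ⟶ A₀) ≫ f₀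
        = pullback.fst (a ≫ f₀) f₀ ≫ a ≫ f₀ := pullback.condition.symm
      _ = pullback.fst (a ≫ f₀) f₀ ≫ f₁ ≫ b := by rw [w]
      _ = (pullback.fst (a ≫ f₀) f₀ ≫ f₁) ≫ b := (Category.assoc _ _ _).symm
  set τ : pullback (a ≫ f₀) f₀ ⟶ pullback f₀ b :=
    pullback.lift (pullback.snd (a ≫ f₀) f₀) (pullback.fst (a ≫ f₀) f₀ ≫ f₁) cτ with hτ
  have pbψ : IsPullback ψ (pullback.snd f₁ f₁) τ
      (pullback.lift a f₁ w.symm : A₁ ⟶ pullback f₀ b) := by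
    refine IsPullback.of_isLimit' ⟨?_⟩ ?_
    · apply pullback.hom_ext
      · simp [hψ, hτ, pullback.lift_fst, pullback.lift_snd, pullback.lift_fst_assoc, pullback.lift_snd_assoc]
      · simp only [Category.assoc, hψ, hτ, pullback.lift_snd]
        rw [← Category.assoc, pullback.lift_fst, pullback.condition]
    · refine PullbackCone.IsLimit.mk _
        (fun s => pullback.lift (s.fst ≫ pullback.fst (a ≫ f₀) f₀) s.snd ?_)
        (fun s => ?_) (fun s => ?_) (fun s u h1 h2 => ?_)
      · have := s.condition =≫ pullback.snd f₀ b
        simp only [Category.assoc, hτ, pullback.lift_snd] at this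
        rw [Category.assoc, this]
      · apply pullback.hom_ext
        · simp [hψ, pullback.lift_fst, pullback.lift_snd, pullback.lift_fst_assoc, pullback.lift_snd_assoc]
        · simp only [Category.assoc, hψ, pullback.lift_snd]
          have := s.condition =≫ pullback.fst f₀ b
          simp only [Category.assoc, hτ, pullback.lift_fst] at this
          rw [← Category.assoc, pullback.lift_snd]
          exact this.symm
      · simp [pullback.lift_fst, pullback.lift_snd, pullback.lift_fst_assoc, pullback.lift_snd_assoc]
      · apply pullback.hom_ext
        · rw [pullback.lift_fst, ← h1]
          try simp [hψ, pullback.lift_fst, pullback.lift_snd, pullback.lift_fst_assoc, pullback.lift_snd_assoc]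
        · rw [pullback.lift_snd, ← h2]
          try rfl
  -- ρ is a pullback of a
  have pbρ : IsPullback ρ (pullback.fst (a ≫ f₀) f₀) (pullback.fst f₀ f₀) a := by
    refine IsPullback.of_isLimit' ⟨by simp [hρ, pullback.lift_fst, pullback.lift_snd, pullback.lift_fst_assoc, pullback.lift_snd_assoc]⟩ ?_
    refine PullbackCone.IsLimit.mk _
      (fun s => pullback.lift s.snd (s.fst ≫ pullback.snd f₀ f₀) ?_)
      (fun s => ?_) (fun s => ?_) (fun s u h1 h2 => ?_)
    · calc s.snd ≫ a ≫ f₀ = (s.snd ≫ a) ≫ f₀ := (Category.assoc _ _ _).symm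
        _ = (s.fst ≫ pullback.fst f₀ f₀) ≫ f₀ := by rw [s.condition]
        _ = s.fst ≫ pullback.fst f₀ f₀ ≫ f₀ := Category.assoc _ _ _
        _ = s.fst ≫ pullback.snd f₀ f₀ ≫ f₀ := by rw [pullback.condition]
        _ = (s.fst ≫ pullback.snd f₀ f₀) ≫ f₀ := (Category.assoc _ _ _).symm
    · apply pullback.hom_ext
      · simp only [Category.assoc, hρ, pullback.lift_fst]
        rw [← Category.assoc, pullback.lift_fst, s.condition]
      · simp [hρ, pullback.lift_fst, pullback.lift_snd, pullback.lift_fst_assoc, pullback.lift_snd_assoc]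
    · simp [pullback.lift_fst, pullback.lift_snd, pullback.lift_fst_assoc, pullback.lift_snd_assoc]
    · apply pullback.hom_ext
      · rw [pullback.lift_fst, ← h2]
        try rfl
      · rw [pullback.lift_snd, ← h1]
        try simp [hρ, pullback.lift_fst, pullback.lift_snd, pullback.lift_fst_assoc, pullback.lift_snd_assoc]
  obtain ⟨rψ⟩ := hstable _ _ _ _ pbψ hdbl
  obtain ⟨rρ⟩ := hstable _ _ _ _ pbρ ha
  haveI := isRegularEpi_of_regularEpi rψ; haveI := isRegularEpi_of_regularEpi rρ
  haveI : StrongEpi (ψ ≫ ρ) := strongEpi_comp ψ ρ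
  rw [hr]
  exact regularEpi_of_strongEpi_aux hcoeq hstable (ψ ≫ ρ)
end

section
/- Let E be a class of morphisms in a category A satisfying (E1)–(E3). Define a two-fold arrow (commutative square with sides in E) to be a double extension if the comparison to the pullback is in E. Then the class E¹ of double extensions in the category Ext A of E-morphisms again satisfies (E1)–(E3): it contains all isomorphisms of extensions, pullbacks of double extensions exist in Ext A (computed degreewise) and are double extensions, and double extensions are closed under composition. -/
open CategoryTheory CategoryTheory.Limits

/-- if `(A, E)` satisfies (E1)–(E3), then the class `E¹` of double
extensions in `Ext A` again satisfies (E1)–(E3): every isomorphism of extensions is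
a double extension; pullbacks of double extensions along squares between extensions
exist in `Ext A` (computed degreewise) and are double extensions; and double
extensions are closed under composition. -/
theorem stmt17 {C : Type*} [Category C] (E : MorphismProperty C)
    (hE1 : ∀ {X Y : C} (f : X ⟶ Y), IsIso f → E f)
    (hE2exists : ∀ {X Y Z : C} (f : X ⟶ Z) (g : Y ⟶ Z), E f → HasPullback g f)
    (hE2stable : ∀ {P X Y Z : C} (fst : P ⟶ X) (snd : P ⟶ Y) (f : X ⟶ Z) (g : Y ⟶ Z),
      IsPullback fst snd f g → E g → E fst)
    (hE3 : ∀ {X Y Z : C} (f : X ⟶ Y) (g : Y ⟶ Z), E f → E g → E (f ≫ g)) :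
    -- (E1) for E¹: isomorphisms of extensions are double extensions
    (∀ {A₁ A₀ B₁ B₀ : C} (x : A₁ ⟶ A₀) (y : B₁ ⟶ B₀) (f₁ : A₁ ⟶ B₁) (f₀ : A₀ ⟶ B₀),
      E x → E y → IsIso f₁ → IsIso f₀ → f₁ ≫ y = x ≫ f₀ →
      IsDblExt E f₁ x y f₀) ∧
    -- (E2) for E¹: degreewise pullbacks of double extensions along squares between
    -- extensions exist and are double extensions
    (∀ {X₁ X₀ Y₁ Y₀ Z₁ Z₀ : C} (x : X₁ ⟶ X₀) (y : Y₁ ⟶ Y₀) (z : Z₁ ⟶ Z₀)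
      (g₁ : Y₁ ⟶ Z₁) (g₀ : Y₀ ⟶ Z₀) (h₁ : X₁ ⟶ Z₁) (h₀ : X₀ ⟶ Z₀),
      E x → E y → E z → h₁ ≫ z = x ≫ h₀ → IsDblExt E g₁ y z g₀ →
      ∃ (P₁ P₀ : C) (u₁ : P₁ ⟶ X₁) (v₁ : P₁ ⟶ Y₁) (u₀ : P₀ ⟶ X₀) (v₀ : P₀ ⟶ Y₀)
        (p : P₁ ⟶ P₀),
        IsPullback u₁ v₁ h₁ g₁ ∧ IsPullback u₀ v₀ h₀ g₀ ∧
        p ≫ u₀ = u₁ ≫ x ∧ p ≫ v₀ = v₁ ≫ y ∧ E p ∧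
        IsDblExt E u₁ p x u₀) ∧
    -- (E3) for E¹: double extensions are closed under composition
    (∀ {A₁ A₀ B₁ B₀ C₁ C₀ : C} (a : A₁ ⟶ A₀) (b : B₁ ⟶ B₀) (c : C₁ ⟶ C₀)
      (f₁ : A₁ ⟶ B₁) (f₀ : A₀ ⟶ B₀) (g₁ : B₁ ⟶ C₁) (g₀ : B₀ ⟶ C₀),
      IsDblExt E f₁ a b f₀ → IsDblExt E g₁ b c g₀ →
      IsDblExt E (f₁ ≫ g₁) a c (f₀ ≫ g₀)) := by

  refine ⟨?_, ?_, ?_⟩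
  · -- (E1)
    intro A₁ A₀ B₁ B₀ x y f₁ f₀ hx hy hf₁ hf₀ hcomm
    refine ⟨hE1 f₁ hf₁, hx, hy, hE1 f₀ hf₀, A₁, x, f₁, 𝟙 A₁, ?_, by simp, by simp,
      hE1 _ inferInstance⟩
    exact IsPullback.of_vert_isIso ⟨hcomm.symm⟩
  · -- (E2)
    intro X₁ X₀ Y₁ Y₀ Z₁ Z₀ x y z g₁ g₀ h₁ h₀ hx hy hz hcomm hg
    obtain ⟨hEg₁, hEy, hEz, hEg₀, Q, qA, qB, e, hQ, heqA, heqB, hEe⟩ := hg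
    have hgcomm : g₁ ≫ z = y ≫ g₀ := by
      rw [← heqB, ← heqA, Category.assoc, Category.assoc, ← hQ.w]
    haveI : HasPullback h₁ g₁ := hE2exists g₁ h₁ hEg₁
    haveI : HasPullback h₀ g₀ := hE2exists g₀ h₀ hEg₀
    set P₁ := pullback h₁ g₁
    set P₀ := pullback h₀ g₀
    set u₁ : P₁ ⟶ X₁ := pullback.fst h₁ g₁ with hu₁
    set v₁ : P₁ ⟶ Y₁ := pullback.snd h₁ g₁ with hv₁
    set u₀ : P₀ ⟶ X₀ := pullback.fst h₀ g₀ with hu₀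
    set v₀ : P₀ ⟶ Y₀ := pullback.snd h₀ g₀ with hv₀
    have hP₁ : IsPullback u₁ v₁ h₁ g₁ := IsPullback.of_hasPullback h₁ g₁
    have hP₀ : IsPullback u₀ v₀ h₀ g₀ := IsPullback.of_hasPullback h₀ g₀
    have hpw : (u₁ ≫ x) ≫ h₀ = (v₁ ≫ y) ≫ g₀ := by
      rw [Category.assoc, Category.assoc, ← hcomm, ← hgcomm, ← Category.assoc,
        hP₁.w, Category.assoc]
    set p : P₁ ⟶ P₀ := hP₀.lift (u₁ ≫ x) (v₁ ≫ y) hpw with hp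
    have hpu : p ≫ u₀ = u₁ ≫ x := hP₀.lift_fst _ _ _
    have hpv : p ≫ v₀ = v₁ ≫ y := hP₀.lift_snd _ _ _
    -- qB is in E (pullback of g₀)
    have hEqB : E qB := hE2stable qB qA z g₀ hQ.flip hEg₀
    haveI : HasPullback h₁ qB := hE2exists qB h₁ hEqB
    set S := pullback h₁ qB
    set sX : S ⟶ X₁ := pullback.fst h₁ qB with hsX
    set sQ : S ⟶ Q := pullback.snd h₁ qB with hsQ
    have hS : IsPullback sX sQ h₁ qB := IsPullback.of_hasPullback h₁ qB
    have hσw : (sX ≫ x) ≫ h₀ = (sQ ≫ qA) ≫ g₀ := by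
      rw [Category.assoc, ← hcomm, ← Category.assoc, hS.w, Category.assoc, Category.assoc,
        hQ.w]
    set σ : S ⟶ P₀ := hP₀.lift (sX ≫ x) (sQ ≫ qA) hσw with hσ
    have hσu : σ ≫ u₀ = sX ≫ x := hP₀.lift_fst _ _ _
    have hσv : σ ≫ v₀ = sQ ≫ qA := hP₀.lift_snd _ _ _
    -- the big pullback square
    have hbig : IsPullback (sQ ≫ qA) sX g₀ (h₁ ≫ z) := hS.flip.paste_horiz hQ
    have hbig' : IsPullback (σ ≫ v₀) sX g₀ (x ≫ h₀) := by
      rwa [hσv, ← hcomm]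
    have hσpb : IsPullback σ sX u₀ x :=
      IsPullback.of_right hbig' (by rw [hσu]) hP₀.flip
    -- the comparison morphism P₁ ⟶ S
    have hccw : u₁ ≫ h₁ = (v₁ ≫ e) ≫ qB := by
      rw [Category.assoc, heqB, hP₁.w]
    set cc : P₁ ⟶ S := hS.lift u₁ (v₁ ≫ e) hccw with hcc
    have hccX : cc ≫ sX = u₁ := hS.lift_fst _ _ _
    have hccQ : cc ≫ sQ = v₁ ≫ e := hS.lift_snd _ _ _
    have hccpb : IsPullback cc v₁ sQ e := by
      refine IsPullback.of_right ?_ (by rw [hccQ]) hS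
      rwa [hccX, heqB]
    have hEcc : E cc := hE2stable cc v₁ sQ e hccpb hEe
    have hEσ : E σ := hE2stable σ sX u₀ x hσpb hx
    have hccσ : cc ≫ σ = p := by
      apply hP₀.hom_ext
      · rw [Category.assoc, hσu, ← Category.assoc, hccX, hpu]
      · rw [Category.assoc, hσv, ← Category.assoc, hccQ, Category.assoc, heqA, hpv]
    have hEp : E p := by rw [← hccσ]; exact hE3 _ _ hEcc hEσ
    have hEu₁ : E u₁ := hE2stable u₁ v₁ h₁ g₁ hP₁ hEg₁
    have hEu₀ : E u₀ := hE2stable u₀ v₀ h₀ g₀ hP₀ hEg₀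
    exact ⟨P₁, P₀, u₁, v₁, u₀, v₀, p, hP₁, hP₀, hpu, hpv, hEp,
      hEu₁, hEp, hx, hEu₀, S, σ, sX, cc, hσpb, hccσ, hccX, hEcc⟩
  · -- (E3)
    intro A₁ A₀ B₁ B₀ C₁ C₀ a b c f₁ f₀ g₁ g₀ hf hg
    obtain ⟨hEf₁, hEa, hEb, hEf₀, P', pA', pB', c₁, hP', hc₁a, hc₁f, hEc₁⟩ := hf
    obtain ⟨hEg₁, hEb', hEc, hEg₀, Q, qA, qB, d, hQ, hdb, hdg, hEd⟩ := hg
    have hEqA : E qA := hE2stable qA qB g₀ c hQ hEc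
    haveI : HasPullback f₀ qA := hE2exists qA f₀ hEqA
    set P := pullback f₀ qA
    set pA : P ⟶ A₀ := pullback.fst f₀ qA with hpA
    set pQ : P ⟶ Q := pullback.snd f₀ qA with hpQ
    have hP : IsPullback pA pQ f₀ qA := IsPullback.of_hasPullback f₀ qA
    have hbig : IsPullback pA (pQ ≫ qB) (f₀ ≫ g₀) c := hP.paste_vert hQ
    have hmw : pA' ≫ f₀ = (pB' ≫ d) ≫ qA := by
      rw [Category.assoc, hdb, hP'.w]
    set m : P' ⟶ P := hP.lift pA' (pB' ≫ d) hmw with hm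
    have hmA : m ≫ pA = pA' := hP.lift_fst _ _ _
    have hmQ : m ≫ pQ = pB' ≫ d := hP.lift_snd _ _ _
    have hmpb : IsPullback m pB' pQ d := by
      refine IsPullback.of_right ?_ (by rw [hmQ]) hP
      rwa [hmA, hdb]
    have hEm : E m := hE2stable m pB' pQ d hmpb hEd
    refine ⟨hE3 _ _ hEf₁ hEg₁, hEa, hEc, hE3 _ _ hEf₀ hEg₀,
      P, pA, pQ ≫ qB, c₁ ≫ m, hbig, ?_, ?_, hE3 _ _ hEc₁ hEm⟩
    · rw [Category.assoc, hmA, hc₁a]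
    · rw [Category.assoc, ← Category.assoc m, hmQ, Category.assoc, hdg,
        ← Category.assoc, hc₁f]
end
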